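/- arXiv:1005.1059 — 10 statements merged into one kernel-verified Lean document; each statement's English description precedes it below -/
import Mathlib

section
/- If the sequences (q^i) and (m^i) satisfy the relaxed IC constraint and the IR constraint, then Σ_{i=1}^K p^i·m^i ≤ Σ_{i=1}^K p^i·q^i·w^i. -/
/-- Under the relaxed IC and IR constraints,
Σ p^i·m^i ≤ Σ p^i·q^i·w^i, where w is the virtual valuation. -/
theorem stmt_2 (K : ℕ) (hK : 1 ≤ K) (x q m p w : ℕ → ℝ)
    (hx0 : 0 ≤ x 1)
    (hxlt : ∀ i, 1 ≤ i → i < K → x i < x (i + 1))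
    (hp : ∀ i, 1 ≤ i → i ≤ K → 0 < p i)
    (hp1 : ∑ i ∈ Finset.Icc 1 K, p i = 1)
    (hw : ∀ i, 1 ≤ i → i ≤ K - 1 →
      w i = x i - (x (i + 1) - x i) * (∑ j ∈ Finset.Icc (i + 1) K, p j) / p i)
    (hwK : w K = x K)
    (hIC : ∀ i j, 1 ≤ i → i ≤ K → 1 ≤ j → j ≤ K →
      q i * x i - m i ≥ q j * x i - m j)
    (hIR : ∀ i, 1 ≤ i → i ≤ K → q i * x i - m i ≥ 0) :
    ∑ i ∈ Finset.Icc 1 K, p i * m i ≤ ∑ i ∈ Finset.Icc 1 K, p i * q i * w i := by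
  obtain ⟨K', rfl⟩ : ∃ K', K = K' + 1 := ⟨K - 1, by omega⟩
  set K := K' + 1 with hKdef
  set u : ℕ → ℝ := fun i => q i * x i - m i with hu
  -- lower bound on utilities
  have hstep : ∀ i, 1 ≤ i → i ≤ K →
      ∑ j ∈ Finset.Icc 1 (i - 1), q j * (x (j + 1) - x j) ≤ u i := by
    intro i hi
    induction i, hi using Nat.le_induction with
    | base =>
      intro _
      have := hIR 1 le_rfl hK
      simp only [hu]
      simpa using this
    | succ n hn ih =>
      intro hnK
      have hnK' : n ≤ K := by omega
      have h1 : u n + q n * (x (n + 1) - x n) ≤ u (n + 1) := by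
        have := hIC (n + 1) n (by omega) hnK hn hnK'
        simp only [hu]
        nlinarith [this]
      have h2 : ∑ j ∈ Finset.Icc 1 (n + 1 - 1), q j * (x (j + 1) - x j)
          = ∑ j ∈ Finset.Icc 1 (n - 1), q j * (x (j + 1) - x j)
            + q n * (x (n + 1) - x n) := by
        have hn1 : n = (n - 1) + 1 := by omega
        rw [Nat.add_sub_cancel]
        rw [hn1, Finset.sum_Icc_succ_top (by omega), ← hn1]
      rw [h2]
      have := ih hnK'
      linarith
  -- key inequality after swapping sums
  have key : ∑ i ∈ Finset.Icc 1 K', q i * (x (i + 1) - x i) * (∑ j ∈ Finset.Icc (i + 1) K, p j)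
      ≤ ∑ i ∈ Finset.Icc 1 K, p i * u i := by
    have swap : ∑ i ∈ Finset.Icc 1 K', ∑ j ∈ Finset.Icc (i + 1) K,
          q i * (x (i + 1) - x i) * p j
        = ∑ j ∈ Finset.Icc 1 K, ∑ i ∈ Finset.Icc 1 (j - 1),
          q i * (x (i + 1) - x i) * p j := by
      apply Finset.sum_comm'
      intro a b
      simp only [Finset.mem_Icc]
      omega
    calc ∑ i ∈ Finset.Icc 1 K', q i * (x (i + 1) - x i) * (∑ j ∈ Finset.Icc (i + 1) K, p j)
        = ∑ i ∈ Finset.Icc 1 K', ∑ j ∈ Finset.Icc (i + 1) K,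
            q i * (x (i + 1) - x i) * p j := by
          refine Finset.sum_congr rfl fun i _ => ?_
          rw [Finset.mul_sum]
      _ = ∑ j ∈ Finset.Icc 1 K, ∑ i ∈ Finset.Icc 1 (j - 1),
            q i * (x (i + 1) - x i) * p j := swap
      _ = ∑ j ∈ Finset.Icc 1 K, p j * ∑ i ∈ Finset.Icc 1 (j - 1),
            q i * (x (i + 1) - x i) := by
          refine Finset.sum_congr rfl fun j _ => ?_
          rw [Finset.mul_sum]
          refine Finset.sum_congr rfl fun i _ => ?_
          ring
      _ ≤ ∑ j ∈ Finset.Icc 1 K, p j * u j := by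
          refine Finset.sum_le_sum fun j hj => ?_
          rw [Finset.mem_Icc] at hj
          exact mul_le_mul_of_nonneg_left (hstep j hj.1 hj.2) (hp j hj.1 hj.2).le
  have e1 : ∑ i ∈ Finset.Icc 1 K, p i * m i
      = ∑ i ∈ Finset.Icc 1 K, p i * q i * x i - ∑ i ∈ Finset.Icc 1 K, p i * u i := by
    rw [← Finset.sum_sub_distrib]
    refine Finset.sum_congr rfl fun i _ => ?_
    simp only [hu]; ring
  have e2 : ∑ i ∈ Finset.Icc 1 K, p i * q i * w i
      = ∑ i ∈ Finset.Icc 1 K, p i * q i * x i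
        - ∑ i ∈ Finset.Icc 1 K', q i * (x (i + 1) - x i) * (∑ j ∈ Finset.Icc (i + 1) K, p j) := by
    rw [Finset.sum_Icc_succ_top (by omega : 1 ≤ K' + 1) (fun i => p i * q i * w i),
        Finset.sum_Icc_succ_top (by omega : 1 ≤ K' + 1) (fun i => p i * q i * x i), hwK]
    have : ∑ i ∈ Finset.Icc 1 K', p i * q i * w i
        = ∑ i ∈ Finset.Icc 1 K', (p i * q i * x i
            - q i * (x (i + 1) - x i) * (∑ j ∈ Finset.Icc (i + 1) K, p j)) := by
      refine Finset.sum_congr rfl fun i hi => ?_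
      rw [Finset.mem_Icc] at hi
      have hpi : p i ≠ 0 := (hp i hi.1 (by omega)).ne'
      rw [hw i hi.1 (by omega)]
      field_simp
    rw [this, Finset.sum_sub_distrib]
    ring
  rw [e1, e2]
  linarith
end

section
/- Suppose 0 ≤ q^1 ≤ q^2 ≤ … ≤ q^K and define m^i = Σ_{j=1}^i (q^j − q^{j−1})·x^j for 1 ≤ i ≤ K, with the convention q^0 = 0. Then (q^i) and (m^i) satisfy the relaxed IC constraint and the IR constraint, and Σ_{i=1}^K p^i·m^i = Σ_{i=1}^K p^i·q^i·w^i. -/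
/-- If 0 ≤ q^1 ≤ … ≤ q^K and m^i = Σ_{j=1}^i (q^j − q^{j−1})·x^j
(with q^0 = 0), then (q^i), (m^i) satisfy the relaxed IC and IR constraints,
and Σ p^i·m^i = Σ p^i·q^i·w^i. -/
theorem stmt_3 (K : ℕ) (hK : 1 ≤ K) (x q m p w : ℕ → ℝ)
    (hx0 : 0 ≤ x 1)
    (hxlt : ∀ i, 1 ≤ i → i < K → x i < x (i + 1))
    (hp : ∀ i, 1 ≤ i → i ≤ K → 0 < p i)
    (hp1 : ∑ i ∈ Finset.Icc 1 K, p i = 1)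
    (hw : ∀ i, 1 ≤ i → i ≤ K - 1 →
      w i = x i - (x (i + 1) - x i) * (∑ j ∈ Finset.Icc (i + 1) K, p j) / p i)
    (hwK : w K = x K)
    (hq0 : q 0 = 0)
    (hq1 : 0 ≤ q 1)
    (hqmono : ∀ i, 1 ≤ i → i ≤ K - 1 → q i ≤ q (i + 1))
    (hm : ∀ i, 1 ≤ i → i ≤ K →
      m i = ∑ j ∈ Finset.Icc 1 i, (q j - q (j - 1)) * x j) :
    (∀ i j, 1 ≤ i → i ≤ K → 1 ≤ j → j ≤ K →
      q i * x i - m i ≥ q j * x i - m j) ∧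
    (∀ i, 1 ≤ i → i ≤ K → q i * x i - m i ≥ 0) ∧
    ∑ i ∈ Finset.Icc 1 K, p i * m i = ∑ i ∈ Finset.Icc 1 K, p i * q i * w i := by
  -- x is monotone on [1, K]
  have hxmono : ∀ a b, 1 ≤ a → a ≤ b → b ≤ K → x a ≤ x b := by
    intro a b ha hab hbK
    induction b, hab using Nat.le_induction with
    | base => exact le_rfl
    | succ b hb ih =>
      exact le_trans (ih (by omega)) (le_of_lt (hxlt b (le_trans ha hb) (by omega)))
  have hxpos : ∀ a, 1 ≤ a → a ≤ K → 0 ≤ x a := fun a ha haK =>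
    le_trans hx0 (hxmono 1 a le_rfl ha haK)
  -- increments of q are nonneg
  have hd : ∀ k, 1 ≤ k → k ≤ K → 0 ≤ q k - q (k - 1) := by
    intro k hk hkK
    rcases eq_or_lt_of_le hk with h1 | h2
    · rw [← h1]; simpa [hq0] using hq1
    · have hk1 : k - 1 + 1 = k := by omega
      have := hqmono (k - 1) (by omega) (by omega)
      rw [hk1] at this
      linarith
  -- telescoping
  have htel : ∀ a b, a ≤ b → ∑ k ∈ Finset.Icc (a + 1) b, (q k - q (k - 1)) = q b - q a := by
    intro a b hab
    induction b, hab using Nat.le_induction with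
    | base => simp
    | succ b hb ih =>
      rw [Finset.sum_Icc_succ_top (by omega), ih]
      simp
  -- splitting m
  have hsplit : ∀ a b, 1 ≤ a → a ≤ b → b ≤ K →
      m b = m a + ∑ k ∈ Finset.Icc (a + 1) b, (q k - q (k - 1)) * x k := by
    intro a b ha hab hbK
    rw [hm a ha (le_trans hab hbK), hm b (le_trans ha hab) hbK]
    have h1 : Finset.Icc 1 b = Finset.Ioc 0 b := by rw [← Finset.Icc_add_one_left_eq_Ioc]; rfl
    have h2 : Finset.Icc 1 a = Finset.Ioc 0 a := by rw [← Finset.Icc_add_one_left_eq_Ioc]; rfl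
    have h3 : Finset.Icc (a + 1) b = Finset.Ioc a b := by rw [← Finset.Icc_add_one_left_eq_Ioc]
    rw [h1, h2, h3, Finset.sum_Ioc_consecutive _ (Nat.zero_le a) hab]
  -- key two-sided bound
  have hkey : ∀ a b, 1 ≤ a → a ≤ b → b ≤ K →
      (q b - q a) * x a ≤ m b - m a ∧ m b - m a ≤ (q b - q a) * x b := by
    intro a b ha hab hbK
    rw [hsplit a b ha hab hbK]
    have hS := htel a b hab
    constructor
    · have : ∑ k ∈ Finset.Icc (a + 1) b, (q k - q (k - 1)) * x a ≤
          ∑ k ∈ Finset.Icc (a + 1) b, (q k - q (k - 1)) * x k := by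
        apply Finset.sum_le_sum
        intro k hk
        simp only [Finset.mem_Icc] at hk
        exact mul_le_mul_of_nonneg_left (hxmono a k ha (by omega) (by omega))
          (hd k (by omega) (by omega))
      rw [← Finset.sum_mul, hS] at this
      linarith
    · have : ∑ k ∈ Finset.Icc (a + 1) b, (q k - q (k - 1)) * x k ≤
          ∑ k ∈ Finset.Icc (a + 1) b, (q k - q (k - 1)) * x b := by
        apply Finset.sum_le_sum
        intro k hk
        simp only [Finset.mem_Icc] at hk
        exact mul_le_mul_of_nonneg_left (hxmono k b (by omega) (by omega) hbK)
          (hd k (by omega) (by omega))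
      rw [← Finset.sum_mul, hS] at this
      linarith
  refine ⟨?_, ?_, ?_⟩
  · -- IC
    intro i j hi hiK hj hjK
    rcases le_or_gt j i with h | h
    · have := (hkey j i hj h hiK).2
      linarith
    · have := (hkey i j hi (le_of_lt h) hjK).1
      linarith
  · -- IR
    intro i hi hiK
    have hmi : m i ≤ q i * x i := by
      rw [hm i hi hiK]
      have h0 : Finset.Icc 1 i = Finset.Icc (0 + 1) i := by norm_num
      have hb : ∑ k ∈ Finset.Icc 1 i, (q k - q (k - 1)) * x k ≤
          ∑ k ∈ Finset.Icc 1 i, (q k - q (k - 1)) * x i := by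
        apply Finset.sum_le_sum
        intro k hk
        simp only [Finset.mem_Icc] at hk
        exact mul_le_mul_of_nonneg_left (hxmono k i (by omega) (by omega) hiK)
          (hd k (by omega) (by omega))
      have ht := htel 0 i (Nat.zero_le i)
      rw [h0] at hb
      rw [← Finset.sum_mul, ht, hq0, sub_zero] at hb
      rw [h0]
      exact hb
    linarith
  · -- the expected payment identity
    set P : ℕ → ℝ := fun j => ∑ i ∈ Finset.Icc j K, p i with hP
    -- Step 1: expand and swap
    have step1 : ∑ i ∈ Finset.Icc 1 K, p i * m i =
        ∑ j ∈ Finset.Icc 1 K, (q j - q (j - 1)) * x j * P j := by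
      have : ∑ i ∈ Finset.Icc 1 K, p i * m i =
          ∑ i ∈ Finset.Icc 1 K, ∑ j ∈ Finset.Icc 1 i, p i * ((q j - q (j - 1)) * x j) := by
        apply Finset.sum_congr rfl
        intro i hi
        simp only [Finset.mem_Icc] at hi
        rw [hm i hi.1 hi.2, Finset.mul_sum]
      rw [this]
      rw [Finset.sum_comm' (t' := Finset.Icc 1 K) (s' := fun j => Finset.Icc j K)
        (by intro a b; simp only [Finset.mem_Icc]; omega)]
      apply Finset.sum_congr rfl
      intro j hj
      rw [hP]
      simp only
      rw [Finset.mul_sum]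
      exact Finset.sum_congr rfl fun i _ => by ring
    -- Abel summation
    have habel : ∀ (f g : ℕ → ℝ), f 0 = 0 → ∀ n,
        ∑ j ∈ Finset.Icc 1 n, (f j - f (j - 1)) * g j =
        (∑ j ∈ Finset.Icc 1 n, f j * (g j - g (j + 1))) + f n * g (n + 1) := by
      intro f g hf n
      induction n with
      | zero => simp [hf]
      | succ n ih =>
        rw [Finset.sum_Icc_succ_top (by omega), Finset.sum_Icc_succ_top (by omega), ih]
        simp only [Nat.add_sub_cancel]
        ring
    have hPK1 : P (K + 1) = 0 := by
      rw [hP]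
      simp only
      rw [Finset.Icc_eq_empty (by omega)]
      simp
    have step2 : ∑ j ∈ Finset.Icc 1 K, (q j - q (j - 1)) * x j * P j =
        ∑ j ∈ Finset.Icc 1 K, q j * (x j * P j - x (j + 1) * P (j + 1)) := by
      have := habel q (fun j => x j * P j) hq0 K
      try simp only at this
      rw [hPK1] at this
      simp only [mul_zero, add_zero] at this
      rw [← this]
      apply Finset.sum_congr rfl
      intro j _
      ring
    -- termwise identification with virtual values
    have step3 : ∀ j ∈ Finset.Icc 1 K,
        q j * (x j * P j - x (j + 1) * P (j + 1)) = p j * q j * w j := by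
      intro j hj
      simp only [Finset.mem_Icc] at hj
      have hPj : P j = p j + P (j + 1) := by
        rw [hP]
        simp only
        rw [Finset.Icc_eq_cons_Ioc (by omega : j ≤ K), Finset.sum_cons, Finset.Icc_add_one_left_eq_Ioc]
      rcases eq_or_lt_of_le hj.2 with hjK | hjK
      · -- j = K
        subst hjK
        rw [hwK, hPK1, hPj, hPK1]
        ring
      · -- j < K
        have hwj := hw j hj.1 (by omega)
        have hpj := (hp j hj.1 hj.2).ne'
        rw [hwj, hPj]
        have hPd : P (j + 1) = ∑ i ∈ Finset.Icc (j + 1) K, p i := rfl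
        rw [← hPd]
        field_simp
        ring
    rw [step1, step2, Finset.sum_congr rfl step3]
end

section
/- Let q^1,…,q^K ∈ [0,1]. There exists a sequence m^1,…,m^K of reals such that (q^i) and (m^i) satisfy both the relaxed IC constraint and the IR constraint if and only if q^i ≤ q^{i+1} for all 1 ≤ i ≤ K−1. -/
/-- Sum bound: for j ≤ i ≤ K, q j * (x i - x j) ≤ Σ_{k∈[j,i)} (x(k+1)-x k) q k,
assuming q is monotone on [1,K] and x increasing. -/
lemma sum_lb (K : ℕ) (x q : ℕ → ℝ)
    (hxlt : ∀ i, 1 ≤ i → i < K → x i < x (i + 1))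
    (hmono : ∀ a b, 1 ≤ a → a ≤ b → b ≤ K → q a ≤ q b)
    {j i : ℕ} (hj : 1 ≤ j) (hji : j ≤ i) (hiK : i ≤ K) :
    q j * (x i - x j) ≤ ∑ k ∈ Finset.Ico j i, (x (k+1) - x k) * q k := by
  have htel : ∑ k ∈ Finset.Ico j i, (x (k+1) - x k) = x i - x j := by
    rw [Finset.sum_Ico_eq_sub _ hji, Finset.sum_range_sub, Finset.sum_range_sub]; ring
  calc q j * (x i - x j) = ∑ k ∈ Finset.Ico j i, (x (k+1) - x k) * q j := by
        rw [← Finset.sum_mul, htel]; ring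
    _ ≤ ∑ k ∈ Finset.Ico j i, (x (k+1) - x k) * q k := by
        apply Finset.sum_le_sum
        intro k hk
        rw [Finset.mem_Ico] at hk
        have hx : x k < x (k+1) := hxlt k (le_trans hj hk.1) (lt_of_lt_of_le hk.2 hiK)
        have hqq : q j ≤ q k := hmono j k hj hk.1 (by omega)
        nlinarith

lemma sum_ub (K : ℕ) (x q : ℕ → ℝ)
    (hxlt : ∀ i, 1 ≤ i → i < K → x i < x (i + 1))
    (hmono : ∀ a b, 1 ≤ a → a ≤ b → b ≤ K → q a ≤ q b)
    {i j : ℕ} (hi : 1 ≤ i) (hij : i ≤ j) (hjK : j ≤ K) :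
    ∑ k ∈ Finset.Ico i j, (x (k+1) - x k) * q k ≤ q j * (x j - x i) := by
  have htel : ∑ k ∈ Finset.Ico i j, (x (k+1) - x k) = x j - x i := by
    rw [Finset.sum_Ico_eq_sub _ hij, Finset.sum_range_sub, Finset.sum_range_sub]; ring
  calc ∑ k ∈ Finset.Ico i j, (x (k+1) - x k) * q k
      ≤ ∑ k ∈ Finset.Ico i j, (x (k+1) - x k) * q j := by
        apply Finset.sum_le_sum
        intro k hk
        rw [Finset.mem_Ico] at hk
        have hx : x k < x (k+1) := hxlt k (le_trans hi hk.1) (lt_of_lt_of_le hk.2 hjK)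
        have hqq : q k ≤ q j := hmono k j (le_trans hi hk.1) (le_of_lt hk.2) hjK
        nlinarith
    _ = q j * (x j - x i) := by rw [← Finset.sum_mul, htel]; ring

/-- For q^1,…,q^K ∈ [0,1], a payment rule (m^i) satisfying the
relaxed IC and IR constraints exists iff q^i ≤ q^{i+1} for all 1 ≤ i ≤ K−1. -/
theorem stmt_4 (K : ℕ) (hK : 1 ≤ K) (x q : ℕ → ℝ)
    (hx0 : 0 ≤ x 1)
    (hxlt : ∀ i, 1 ≤ i → i < K → x i < x (i + 1))
    (hq01 : ∀ i, 1 ≤ i → i ≤ K → 0 ≤ q i ∧ q i ≤ 1) :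
    (∃ m : ℕ → ℝ,
      (∀ i j, 1 ≤ i → i ≤ K → 1 ≤ j → j ≤ K →
        q i * x i - m i ≥ q j * x i - m j) ∧
      (∀ i, 1 ≤ i → i ≤ K → q i * x i - m i ≥ 0))
    ↔
    (∀ i, 1 ≤ i → i ≤ K - 1 → q i ≤ q (i + 1)) := by
  constructor
  · rintro ⟨m, hIC, _⟩ i hi1 hiK
    have h1 := hIC i (i+1) hi1 (by omega) (by omega) (by omega)
    have h2 := hIC (i+1) i (by omega) (by omega) hi1 (by omega)
    have hx := hxlt i hi1 (by omega)
    nlinarith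
  · intro hadj
    have hmono : ∀ a b, 1 ≤ a → a ≤ b → b ≤ K → q a ≤ q b := by
      intro a b ha hab hbK
      induction b with
      | zero => omega
      | succ n ih =>
        rcases Nat.eq_or_lt_of_le hab with h | h
        · rw [h]
        · exact le_trans (ih (by omega) (by omega))
            (hadj n (by omega) (by omega))
    set S : ℕ → ℝ := fun i => ∑ k ∈ Finset.Ico 1 i, (x (k+1) - x k) * q k with hS
    refine ⟨fun i => q i * x i - S i, ?_, ?_⟩
    · intro i j hi1 hiK hj1 hjK
      have key : q j * (x i - x j) ≤ S i - S j := by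
        rcases le_total j i with hji | hij
        · have := sum_lb K x q hxlt hmono hj1 hji hiK
          have hsplit : S j + ∑ k ∈ Finset.Ico j i, (x (k+1) - x k) * q k = S i := by
            simp only [hS]
            exact Finset.sum_Ico_consecutive _ hj1 hji
          linarith
        · have := sum_ub K x q hxlt hmono hi1 hij hjK
          have hsplit : S i + ∑ k ∈ Finset.Ico i j, (x (k+1) - x k) * q k = S j := by
            simp only [hS]
            exact Finset.sum_Ico_consecutive _ hi1 hij
          nlinarith
      simp only [ge_iff_le]
      nlinarith
    · intro i hi1 hiK
      have hSnn : 0 ≤ S i := by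
        apply Finset.sum_nonneg
        intro k hk
        rw [Finset.mem_Ico] at hk
        have hx : x k < x (k+1) := hxlt k hk.1 (by omega)
        have hq : 0 ≤ q k := (hq01 k hk.1 (by omega)).1
        nlinarith
      simp only [ge_iff_le]
      linarith
end

section
/- If q^1 ≤ q^2 ≤ … ≤ q^K are reals, then Σ_{i=1}^K p^i·q^i·w^i ≤ Σ_{i=1}^K p^i·q^i·w̄^i. -/
/-- Abel summation for telescoping products. -/
lemma stmt8_abel (q d : ℕ → ℝ) (K : ℕ) (hK : 1 ≤ K) :
    ∑ i ∈ Finset.Icc 1 K, q i * (d i - d (i - 1)) =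
      ∑ i ∈ Finset.Icc 1 (K - 1), (q i - q (i + 1)) * d i
        + (q K * d K - q 1 * d 0) := by
  induction K, hK using Nat.le_induction with
  | base => simp; ring
  | succ n hn ih =>
    rw [Finset.sum_Icc_succ_top (by omega)]
    have h1 : n + 1 - 1 = n := rfl
    have h2 : n - 1 + 1 = n := by omega
    rw [ih, h1, ← h2, Finset.sum_Icc_succ_top (by omega), h2]
    ring

/-- If q^1 ≤ q^2 ≤ … ≤ q^K, then
Σ p^i·q^i·w^i ≤ Σ p^i·q^i·w̄^i. -/
theorem stmt_8 (K : ℕ) (hK : 1 ≤ K) (x p q w : ℕ → ℝ)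
    (hx0 : 0 ≤ x 1)
    (hxlt : ∀ i, 1 ≤ i → i < K → x i < x (i + 1))
    (hp : ∀ i, 1 ≤ i → i ≤ K → 0 < p i)
    (hp1 : ∑ i ∈ Finset.Icc 1 K, p i = 1)
    (hw : ∀ i, 1 ≤ i → i ≤ K - 1 →
      w i = x i - (x (i + 1) - x i) * (∑ j ∈ Finset.Icc (i + 1) K, p j) / p i)
    (hwK : w K = x K)
    (g h hbar wbar : ℕ → ℝ)
    (hg : ∀ i ≤ K, g i = ∑ j ∈ Finset.Icc 1 i, p j)
    (hh : ∀ i ≤ K, h i = -x (i + 1) * ∑ j ∈ Finset.Icc (i + 1) K, p j)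
    (hbar_min : ∀ i ≤ K, IsLeast {y : ℝ |
        ((g i, y) : ℝ × ℝ) ∈ convexHull ℝ {P : ℝ × ℝ | ∃ j ≤ K, P = (g j, h j)}}
      (hbar i))
    (hwbar : ∀ i, 1 ≤ i → i ≤ K →
      wbar i = (hbar i - hbar (i - 1)) / (g i - g (i - 1)))
    (hqmono : ∀ i, 1 ≤ i → i ≤ K - 1 → q i ≤ q (i + 1)) :
    ∑ i ∈ Finset.Icc 1 K, p i * q i * w i ≤
      ∑ i ∈ Finset.Icc 1 K, p i * q i * wbar i := by
  set S : Set (ℝ × ℝ) := {P : ℝ × ℝ | ∃ j ≤ K, P = (g j, h j)} with hS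
  -- hbar i ≤ h i
  have hble : ∀ i ≤ K, hbar i ≤ h i := by
    intro i hi
    exact (hbar_min i hi).2 (subset_convexHull ℝ S ⟨i, hi, rfl⟩)
  -- basic facts on g
  have hg0 : g 0 = 0 := by rw [hg 0 (Nat.zero_le K)]; simp
  have hgpos : ∀ j, 1 ≤ j → j ≤ K → 0 < g j := by
    intro j hj1 hjK
    rw [hg j hjK]
    apply Finset.sum_pos
    · intro i hi
      simp only [Finset.mem_Icc] at hi
      exact hp i hi.1 (hi.2.trans hjK)
    · exact ⟨1, by simp [hj1]⟩
  have hIoc : ∀ n : ℕ, Finset.Icc 1 n = Finset.Ioc 0 n := by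
    intro n; ext a; simp [Nat.lt_iff_add_one_le]
  have hgdiff : ∀ j ≤ K, g K - g j = ∑ i ∈ Finset.Icc (j + 1) K, p i := by
    intro j hj
    rw [hg K le_rfl, hg j hj]
    have := Finset.sum_Ioc_consecutive p (Nat.zero_le j) hj
    rw [hIoc, hIoc, ← this]
    have : Finset.Icc (j + 1) K = Finset.Ioc j K := by
      ext a; simp only [Finset.mem_Icc, Finset.mem_Ioc]; omega
    rw [this]; ring
  have hgKdiffpos : ∀ j, j < K → 0 < g K - g j := by
    intro j hj
    rw [hgdiff j hj.le]
    apply Finset.sum_pos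
    · intro i hi
      simp only [Finset.mem_Icc] at hi
      exact hp i (by omega) hi.2
    · exact ⟨j + 1, by simp [Finset.mem_Icc]; omega⟩
  -- hbar 0 = h 0
  have hne1K : (Finset.Icc 1 K).Nonempty := ⟨1, by simp [hK]⟩
  have hbar0 : hbar 0 = h 0 := by
    refine le_antisymm (hble 0 (Nat.zero_le K)) ?_
    set M : ℝ := (Finset.Icc 1 K).sup' hne1K (fun j => (h 0 - h j) / g j) with hM
    have hlin : IsLinearMap ℝ (fun P : ℝ × ℝ => P.2 + M * P.1) := by
      constructor
      · intro a b; simp [Prod.fst_add, Prod.snd_add]; ring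
      · intro c a; simp [Prod.smul_fst, Prod.smul_snd, smul_eq_mul]; ring
    have hsub : S ⊆ {P : ℝ × ℝ | h 0 ≤ P.2 + M * P.1} := by
      rintro P ⟨j, hj, rfl⟩
      rcases Nat.eq_zero_or_pos j with rfl | hj1
      · simp [hg0]
      · have hgj : 0 < g j := hgpos j hj1 hj
        have hMle : (h 0 - h j) / g j ≤ M :=
          Finset.le_sup' (fun j => (h 0 - h j) / g j) (Finset.mem_Icc.mpr ⟨hj1, hj⟩)
        have := (div_le_iff₀ hgj).mp hMle
        simp only [Set.mem_setOf_eq]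
        nlinarith
    have hhull := convexHull_min hsub (convex_halfSpace_ge hlin (h 0))
    have hmem := (hbar_min 0 (Nat.zero_le K)).1
    have := hhull hmem
    simp only [Set.mem_setOf_eq, hg0] at this
    linarith
  -- hbar K = h K
  have hbarK : hbar K = h K := by
    refine le_antisymm (hble K le_rfl) ?_
    have hneR : (Finset.range K).Nonempty := ⟨0, by simpa using (by omega : 0 < K)⟩
    set M : ℝ := (Finset.range K).sup' hneR (fun j => (h K - h j) / (g K - g j)) with hM
    have hlin : IsLinearMap ℝ (fun P : ℝ × ℝ => P.2 - M * P.1) := by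
      constructor
      · intro a b; simp [Prod.fst_add, Prod.snd_add]; ring
      · intro c a; simp [Prod.smul_fst, Prod.smul_snd, smul_eq_mul]; ring
    have hsub : S ⊆ {P : ℝ × ℝ | h K - M * g K ≤ P.2 - M * P.1} := by
      rintro P ⟨j, hj, rfl⟩
      rcases eq_or_lt_of_le hj with rfl | hjK
      · simp
      · have hgj : 0 < g K - g j := hgKdiffpos j hjK
        have hMle : (h K - h j) / (g K - g j) ≤ M :=
          Finset.le_sup' (fun j => (h K - h j) / (g K - g j)) (Finset.mem_range.mpr hjK)
        have := (div_le_iff₀ hgj).mp hMle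
        simp only [Set.mem_setOf_eq]
        nlinarith
    have hhull := convexHull_min hsub (convex_halfSpace_ge hlin (h K - M * g K))
    have hmem := (hbar_min K le_rfl).1
    have := hhull hmem
    simp only [Set.mem_setOf_eq] at this
    linarith
  -- p i * wbar i = hbar i - hbar (i-1)
  have hgstep : ∀ i, 1 ≤ i → i ≤ K → g i - g (i - 1) = p i := by
    intro i hi1 hiK
    obtain ⟨m, rfl⟩ : ∃ m, i = m + 1 := ⟨i - 1, by omega⟩
    simp only [Nat.add_sub_cancel]
    rw [hg (m + 1) hiK, hg m (by omega), Finset.sum_Icc_succ_top (by omega)]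
    ring
  have hpwbar : ∀ i, 1 ≤ i → i ≤ K → p i * wbar i = hbar i - hbar (i - 1) := by
    intro i hi1 hiK
    rw [hwbar i hi1 hiK, hgstep i hi1 hiK]
    field_simp [(hp i hi1 hiK).ne']
  -- p i * w i = h i - h (i-1)
  have hIccsplit : ∀ i, 1 ≤ i → i ≤ K →
      ∑ j ∈ Finset.Icc i K, p j = p i + ∑ j ∈ Finset.Icc (i + 1) K, p j := by
    intro i hi1 hiK
    have : Finset.Icc i K = insert i (Finset.Icc (i + 1) K) := by
      ext a; simp only [Finset.mem_Icc, Finset.mem_insert]; omega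
    rw [this, Finset.sum_insert (by simp)]
  have hpw : ∀ i, 1 ≤ i → i ≤ K → p i * w i = h i - h (i - 1) := by
    intro i hi1 hiK
    have him1 : i - 1 + 1 = i := by omega
    rcases eq_or_lt_of_le hiK with rfl | hiK'
    · rw [hwK, hh i le_rfl, hh (i - 1) (by omega), him1]
      rw [show Finset.Icc (i + 1) i = ∅ from by simp, hIccsplit i hi1 le_rfl]
      simp
      ring
    · have hile : i ≤ K - 1 := by omega
      rw [hw i hi1 hile, hh i hiK, hh (i - 1) (by omega), him1,
        hIccsplit i hi1 hiK]
      field_simp [(hp i hi1 hiK).ne']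
      ring
  -- combine
  rw [← sub_nonneg, ← Finset.sum_sub_distrib]
  have hterm : ∀ i ∈ Finset.Icc 1 K,
      p i * q i * wbar i - p i * q i * w i =
        q i * ((hbar i - h i) - (hbar (i - 1) - h (i - 1))) := by
    intro i hi
    simp only [Finset.mem_Icc] at hi
    have h1 := hpwbar i hi.1 hi.2
    have h2 := hpw i hi.1 hi.2
    linear_combination q i * h1 - q i * h2
  rw [Finset.sum_congr rfl hterm,
    stmt8_abel q (fun i => hbar i - h i) K hK]
  simp only [hbar0, hbarK, sub_self, mul_zero, zero_sub, sub_zero, neg_zero, add_zero]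
  apply Finset.sum_nonneg
  intro i hi
  simp only [Finset.mem_Icc] at hi
  have hq := hqmono i hi.1 hi.2
  have hd : hbar i - h i ≤ 0 := sub_nonpos.mpr (hble i (by omega))
  nlinarith
end

section
/- If 0 ≤ i < j ≤ K are indices with h̄^i = h^i and h̄^j = h^j, then Σ_{l=i+1}^j p^l·w^l = Σ_{l=i+1}^j p^l·w̄^l. -/
lemma tele_aux (F : ℕ → ℝ) (i j : ℕ) (hij : i ≤ j) :
    ∑ l ∈ Finset.Icc (i + 1) j, (F l - F (l - 1)) = F j - F i := by
  induction j with
  | zero => interval_cases i; simp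
  | succ n ih =>
    rcases Nat.eq_or_lt_of_le hij with rfl | hlt
    · simp
    · have hin : i ≤ n := Nat.lt_succ_iff.mp hlt
      rw [Finset.sum_Icc_succ_top (Nat.succ_le_succ hin), ih hin]
      simp only [Nat.add_sub_cancel]
      ring

/-- If 0 ≤ i < j ≤ K with h̄^i = h^i and h̄^j = h^j, then
Σ_{l=i+1}^j p^l·w^l = Σ_{l=i+1}^j p^l·w̄^l. -/
theorem stmt_9 (K : ℕ) (hK : 1 ≤ K) (x p w : ℕ → ℝ)
    (hx0 : 0 ≤ x 1)
    (hxlt : ∀ i, 1 ≤ i → i < K → x i < x (i + 1))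
    (hp : ∀ i, 1 ≤ i → i ≤ K → 0 < p i)
    (hp1 : ∑ i ∈ Finset.Icc 1 K, p i = 1)
    (hw : ∀ i, 1 ≤ i → i ≤ K - 1 →
      w i = x i - (x (i + 1) - x i) * (∑ j ∈ Finset.Icc (i + 1) K, p j) / p i)
    (hwK : w K = x K)
    (g h hbar wbar : ℕ → ℝ)
    (hg : ∀ i ≤ K, g i = ∑ j ∈ Finset.Icc 1 i, p j)
    (hh : ∀ i ≤ K, h i = -x (i + 1) * ∑ j ∈ Finset.Icc (i + 1) K, p j)
    (hbar_min : ∀ i ≤ K, IsLeast {y : ℝ |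
        ((g i, y) : ℝ × ℝ) ∈ convexHull ℝ {P : ℝ × ℝ | ∃ j ≤ K, P = (g j, h j)}}
      (hbar i))
    (hwbar : ∀ i, 1 ≤ i → i ≤ K →
      wbar i = (hbar i - hbar (i - 1)) / (g i - g (i - 1)))
    (i j : ℕ) (hij : i < j) (hjK : j ≤ K)
    (hi : hbar i = h i) (hj : hbar j = h j) :
    ∑ l ∈ Finset.Icc (i + 1) j, p l * w l =
      ∑ l ∈ Finset.Icc (i + 1) j, p l * wbar l := by
  -- g l - g (l-1) = p l for 1 ≤ l ≤ K
  have hgp : ∀ l, 1 ≤ l → l ≤ K → g l - g (l - 1) = p l := by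
    intro l hl hlK
    rw [hg l hlK, hg (l - 1) (le_trans (Nat.sub_le _ _) hlK)]
    obtain ⟨m, rfl⟩ := Nat.exists_eq_add_of_le hl
    simp only [Nat.add_sub_cancel_left] at *
    rw [show 1 + m = m + 1 by ring, Finset.sum_Icc_succ_top (Nat.le_add_left 1 m)]
    ring
  -- p l * w l = h l - h (l-1)
  have hpw : ∀ l, 1 ≤ l → l ≤ K → p l * w l = h l - h (l - 1) := by
    intro l hl hlK
    have hpl := hp l hl hlK
    have hsplit : ∑ j ∈ Finset.Icc l K, p j = p l + ∑ j ∈ Finset.Icc (l + 1) K, p j := by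
      rw [Finset.Icc_eq_cons_Ioc hlK, Finset.sum_cons, ← Finset.Icc_add_one_left_eq_Ioc]
    have hhl := hh l hlK
    have hhl1 := hh (l - 1) (le_trans (Nat.sub_le _ _) hlK)
    have hl1 : l - 1 + 1 = l := Nat.succ_pred_eq_of_pos hl
    rw [hl1] at hhl1
    rcases Nat.eq_or_lt_of_le hlK with rfl | hlt
    · have : ∑ j ∈ Finset.Icc (l + 1) l, p j = 0 := by
        rw [Finset.Icc_eq_empty (by omega)]; simp
      rw [hwK, hhl, hhl1, hsplit, this]
      ring
    · rw [hw l hl (by omega), hhl, hhl1, hsplit]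
      field_simp
      ring
  -- p l * wbar l = hbar l - hbar (l-1)
  have hpwb : ∀ l, 1 ≤ l → l ≤ K → p l * wbar l = hbar l - hbar (l - 1) := by
    intro l hl hlK
    have hpl := hp l hl hlK
    rw [hwbar l hl hlK, hgp l hl hlK, mul_div_cancel₀ _ (ne_of_gt hpl)]
  have h1 : ∑ l ∈ Finset.Icc (i + 1) j, p l * w l = h j - h i := by
    rw [← tele_aux h i j (le_of_lt hij)]
    apply Finset.sum_congr rfl
    intro l hl
    rw [Finset.mem_Icc] at hl
    exact hpw l (by omega) (by omega)
  have h2 : ∑ l ∈ Finset.Icc (i + 1) j, p l * wbar l = hbar j - hbar i := by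
    rw [← tele_aux hbar i j (le_of_lt hij)]
    apply Finset.sum_congr rfl
    intro l hl
    rw [Finset.mem_Icc] at hl
    exact hpwb l (by omega) (by omega)
  rw [h1, h2, hi, hj]
end

section
/- Let q^1,…,q^K be reals such that q^l = q^{l+1} for every index 1 ≤ l ≤ K−1 with h̄^l < h^l (i.e., q is constant across every ironed point). Then Σ_{i=1}^K p^i·q^i·w^i = Σ_{i=1}^K p^i·q^i·w̄^i. -/
/-- If q is constant across every ironed point
(q^l = q^{l+1} whenever h̄^l < h^l for 1 ≤ l ≤ K−1), then
Σ p^i·q^i·w^i = Σ p^i·q^i·w̄^i. -/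
theorem stmt_10 (K : ℕ) (hK : 1 ≤ K) (x p q w : ℕ → ℝ)
    (hx0 : 0 ≤ x 1)
    (hxlt : ∀ i, 1 ≤ i → i < K → x i < x (i + 1))
    (hp : ∀ i, 1 ≤ i → i ≤ K → 0 < p i)
    (hp1 : ∑ i ∈ Finset.Icc 1 K, p i = 1)
    (hw : ∀ i, 1 ≤ i → i ≤ K - 1 →
      w i = x i - (x (i + 1) - x i) * (∑ j ∈ Finset.Icc (i + 1) K, p j) / p i)
    (hwK : w K = x K)
    (g h hbar wbar : ℕ → ℝ)
    (hg : ∀ i ≤ K, g i = ∑ j ∈ Finset.Icc 1 i, p j)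
    (hh : ∀ i ≤ K, h i = -x (i + 1) * ∑ j ∈ Finset.Icc (i + 1) K, p j)
    (hbar_min : ∀ i ≤ K, IsLeast {y : ℝ |
        ((g i, y) : ℝ × ℝ) ∈ convexHull ℝ {P : ℝ × ℝ | ∃ j ≤ K, P = (g j, h j)}}
      (hbar i))
    (hwbar : ∀ i, 1 ≤ i → i ≤ K →
      wbar i = (hbar i - hbar (i - 1)) / (g i - g (i - 1)))
    (hqconst : ∀ l, 1 ≤ l → l ≤ K - 1 → hbar l < h l → q l = q (l + 1)) :
    ∑ i ∈ Finset.Icc 1 K, p i * q i * w i =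
      ∑ i ∈ Finset.Icc 1 K, p i * q i * wbar i := by
  -- tail sums
  set S : ℕ → ℝ := fun i => ∑ j ∈ Finset.Ioc i K, p j with hS
  have hIoc : ∀ a b : ℕ, Finset.Icc (a+1) b = Finset.Ioc a b := fun a b => Finset.Icc_add_one_left_eq_Ioc a b
  have hg' : ∀ i ≤ K, g i = ∑ j ∈ Finset.Ioc 0 i, p j := by
    intro i hi; rw [hg i hi]; congr 1
  have hh' : ∀ i ≤ K, h i = -x (i + 1) * S i := by
    intro i hi; rw [hh i hi, hS]; congr 1; rw [hIoc i K]
  -- difference of consecutive tail sums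
  have hSsplit : ∀ i, 1 ≤ i → i ≤ K → S (i - 1) = p i + S i := by
    intro i h1 h2
    have : Finset.Ioc (i-1) K = insert i (Finset.Ioc i K) := by
      ext a; simp [Finset.mem_Ioc, Finset.mem_insert]; omega
    rw [hS]; simp only [this]
    rw [Finset.sum_insert (by simp [Finset.mem_Ioc])]
  have hSK : S K = 0 := by simp [hS]
  -- g differences
  have hgdiff : ∀ i, 1 ≤ i → i ≤ K → g i - g (i - 1) = p i := by
    intro i h1 h2
    rw [hg' i h2, hg' (i-1) (by omega)]
    have : Finset.Ioc 0 i = insert i (Finset.Ioc 0 (i-1)) := by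
      ext a; simp [Finset.mem_Ioc, Finset.mem_insert]; omega
    rw [this, Finset.sum_insert (by simp)]
    ring
  -- p i * w i = h i - h (i-1)
  have hpw : ∀ i, 1 ≤ i → i ≤ K → p i * w i = h i - h (i - 1) := by
    intro i h1 h2
    have hpi := hp i h1 h2
    have hhi1 : h (i - 1) = -x i * (p i + S i) := by
      have h3 := hh' (i-1) (by omega)
      have hi' : i - 1 + 1 = i := by omega
      rw [hi'] at h3
      rw [h3, hSsplit i h1 h2]
    rcases eq_or_lt_of_le h2 with rfl | hlt
    · rw [hwK, hh' i le_rfl, hSK, hhi1, hSK]; ring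
    · rw [hw i h1 (by omega), hh' i h2, hhi1, hIoc i K]
      field_simp
      ring
  -- p i * wbar i = hbar i - hbar (i-1)
  have hpwbar : ∀ i, 1 ≤ i → i ≤ K → p i * wbar i = hbar i - hbar (i - 1) := by
    intro i h1 h2
    have hpi := (hp i h1 h2).ne'
    rw [hwbar i h1 h2, hgdiff i h1 h2]
    field_simp
  -- half-space bound on hbar
  have hhull : ∀ (M c : ℝ), (∀ j ≤ K, M * g j - h j ≤ c) →
      ∀ i ≤ K, M * g i - hbar i ≤ c := by
    intro M c hgen i hi
    have hlin : IsLinearMap ℝ (fun P : ℝ × ℝ => M * P.1 - P.2) := by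
      constructor
      · intro a b; simp; ring
      · intro a b; simp [smul_eq_mul]; ring
    have hconv : Convex ℝ {P : ℝ × ℝ | M * P.1 - P.2 ≤ c} := convex_halfSpace_le hlin c
    have hsub : convexHull ℝ {P : ℝ × ℝ | ∃ j ≤ K, P = (g j, h j)} ⊆
        {P : ℝ × ℝ | M * P.1 - P.2 ≤ c} := by
      apply convexHull_min _ hconv
      rintro P ⟨j, hj, rfl⟩
      exact hgen j hj
    exact hsub (hbar_min i hi).1
  -- hbar i ≤ h i
  have hble : ∀ i ≤ K, hbar i ≤ h i := by
    intro i hi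
    exact (hbar_min i hi).2 (subset_convexHull ℝ _ ⟨i, hi, rfl⟩)
  -- g is strictly increasing : g b - g a > 0 for a < b ≤ K
  have hgpos : ∀ a b : ℕ, a < b → b ≤ K → 0 < g b - g a := by
    intro a b hab hb
    rw [hg' b hb, hg' a (by omega)]
    have hsub : Finset.Ioc 0 a ⊆ Finset.Ioc 0 b := Finset.Ioc_subset_Ioc_right (by omega)
    rw [← Finset.sum_sdiff_eq_sub hsub]
    apply Finset.sum_pos
    · intro j hj
      simp [Finset.mem_sdiff, Finset.mem_Ioc] at hj
      exact hp j (by omega) (by omega)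
    · refine ⟨b, ?_⟩
      simp [Finset.mem_sdiff, Finset.mem_Ioc]; omega
  -- endpoint 0
  have hb0 : hbar 0 = h 0 := by
    refine le_antisymm (hble 0 (by omega)) ?_
    set M : ℝ := (Finset.Icc 1 K).inf' (by simp; omega) (fun j => (h j - h 0) / (g j - g 0))
    have hgen : ∀ j ≤ K, M * g j - h j ≤ M * g 0 - h 0 := by
      intro j hj
      rcases Nat.eq_zero_or_pos j with rfl | hj1
      · exact le_rfl
      · have hMle : M ≤ (h j - h 0) / (g j - g 0) :=
          Finset.inf'_le _ (by simp [Finset.mem_Icc]; omega)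
        have hpos := hgpos 0 j hj1 hj
        have := (le_div_iff₀ hpos).mp hMle
        nlinarith
    have := hhull M (M * g 0 - h 0) hgen 0 (by omega)
    linarith
  -- endpoint K
  have hbK : hbar K = h K := by
    refine le_antisymm (hble K le_rfl) ?_
    set M : ℝ := (Finset.Icc 0 (K-1)).sup' (by simp) (fun j => (h K - h j) / (g K - g j))
    have hgen : ∀ j ≤ K, M * g j - h j ≤ M * g K - h K := by
      intro j hj
      rcases eq_or_lt_of_le hj with rfl | hjlt
      · exact le_rfl
      · have hjmem : j ∈ Finset.Icc 0 (K-1) := by simp [Finset.mem_Icc]; omega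
        have hMge : (h K - h j) / (g K - g j) ≤ M :=
          Finset.le_sup' (fun j => (h K - h j) / (g K - g j)) hjmem
        have hpos := hgpos j K hjlt le_rfl
        have := (div_le_iff₀ hpos).mp hMge
        nlinarith
    have := hhull M (M * g K - h K) hgen K le_rfl
    linarith
  -- now the sum manipulation
  have step1 : ∀ i ∈ Finset.Icc 1 K, p i * q i * w i = q i * (h i - h (i-1)) := by
    intro i hi; simp [Finset.mem_Icc] at hi
    rw [mul_comm (p i) (q i), mul_assoc, hpw i hi.1 hi.2]
  have step2 : ∀ i ∈ Finset.Icc 1 K, p i * q i * wbar i = q i * (hbar i - hbar (i-1)) := by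
    intro i hi; simp [Finset.mem_Icc] at hi
    rw [mul_comm (p i) (q i), mul_assoc, hpwbar i hi.1 hi.2]
  rw [Finset.sum_congr rfl step1, Finset.sum_congr rfl step2]
  -- d i = h i - hbar i
  set d : ℕ → ℝ := fun i => h i - hbar i with hd
  have key : ∑ i ∈ Finset.Icc 1 K, q i * d i = ∑ i ∈ Finset.Icc 1 K, q i * d (i-1) := by
    have reindex : ∑ i ∈ Finset.Icc 1 K, q i * d (i-1)
        = ∑ j ∈ Finset.Icc 0 (K-1), q (j+1) * d j := by
      apply Finset.sum_nbij' (fun i => i - 1) (fun j => j + 1)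
      · intro a ha; simp [Finset.mem_Icc] at ha ⊢; omega
      · intro a ha; simp [Finset.mem_Icc] at ha ⊢; omega
      · intro a ha; simp [Finset.mem_Icc] at ha; omega
      · intro a ha; omega
      · intro a ha; simp [Finset.mem_Icc] at ha
        congr 2; omega
    rw [reindex]
    have split0 : Finset.Icc 0 (K-1) = insert 0 (Finset.Icc 1 (K-1)) := by
      ext a; simp [Finset.mem_Icc]; omega
    have splitK : Finset.Icc 1 K = insert K (Finset.Icc 1 (K-1)) := by
      ext a; simp [Finset.mem_Icc]; omega
    have hd0 : d 0 = 0 := by simp [hd, hb0]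
    have hdK : d K = 0 := by simp [hd, hbK]
    rw [split0, splitK,
      Finset.sum_insert (by intro hc; simp [Finset.mem_Icc] at hc; omega),
      Finset.sum_insert (by intro hc; simp [Finset.mem_Icc] at hc)]
    rw [hd0, hdK]
    simp only [mul_zero, zero_add, add_zero]
    apply Finset.sum_congr rfl
    intro i hi; simp [Finset.mem_Icc] at hi
    rcases eq_or_lt_of_le (hble i (by omega)) with heq | hlt
    · simp [hd, heq]
    · rw [hqconst i hi.1 hi.2 hlt]
  have final : ∀ i ∈ Finset.Icc 1 K,
      q i * (h i - h (i-1)) - q i * (hbar i - hbar (i-1)) = q i * d i - q i * d (i-1) := by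
    intro i _; simp only [hd]; ring
  have main : ∑ i ∈ Finset.Icc 1 K,
      (q i * (h i - h (i-1)) - q i * (hbar i - hbar (i-1))) = 0 := by
    rw [Finset.sum_congr rfl final, Finset.sum_sub_distrib, key, sub_self]
  rw [Finset.sum_sub_distrib] at main
  linarith
end

section
/- The monotone virtual valuation satisfies w̄^i < x^i for all 1 ≤ i ≤ K−1, and w̄^K = x^K. -/
set_option maxHeartbeats 1600000 in
/-- w̄^i < x^i for all 1 ≤ i ≤ K−1, and w̄^K = x^K. -/
theorem stmt_11 (K : ℕ) (hK : 1 ≤ K) (x p : ℕ → ℝ)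
    (hx0 : 0 ≤ x 1)
    (hxlt : ∀ i, 1 ≤ i → i < K → x i < x (i + 1))
    (hp : ∀ i, 1 ≤ i → i ≤ K → 0 < p i)
    (hp1 : ∑ i ∈ Finset.Icc 1 K, p i = 1)
    (g h hbar wbar : ℕ → ℝ)
    (hg : ∀ i ≤ K, g i = ∑ j ∈ Finset.Icc 1 i, p j)
    (hh : ∀ i ≤ K, h i = -x (i + 1) * ∑ j ∈ Finset.Icc (i + 1) K, p j)
    (hbar_min : ∀ i ≤ K, IsLeast {y : ℝ |
        ((g i, y) : ℝ × ℝ) ∈ convexHull ℝ {P : ℝ × ℝ | ∃ j ≤ K, P = (g j, h j)}}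
      (hbar i))
    (hwbar : ∀ i, 1 ≤ i → i ≤ K →
      wbar i = (hbar i - hbar (i - 1)) / (g i - g (i - 1))) :
    (∀ i, 1 ≤ i → i ≤ K - 1 → wbar i < x i) ∧ wbar K = x K := by
  set S : Set (ℝ × ℝ) := {P : ℝ × ℝ | ∃ j ≤ K, P = (g j, h j)} with hSdef
  -- basic facts about g
  have hgIoc : ∀ j, j ≤ K → g j = ∑ l ∈ Finset.Ioc 0 j, p l := by
    intro j hj
    rw [hg j hj, ← Finset.Icc_add_one_left_eq_Ioc 0 j]
    rfl
  have hgg : ∀ a b : ℕ, a ≤ b → b ≤ K → g b = g a + ∑ l ∈ Finset.Ioc a b, p l := by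
    intro a b hab hb
    rw [hgIoc a (le_trans hab hb), hgIoc b hb,
      ← Finset.sum_Ioc_consecutive _ (Nat.zero_le a) hab]
  have hsumpos : ∀ a b : ℕ, a < b → b ≤ K → 0 < ∑ l ∈ Finset.Ioc a b, p l := by
    intro a b hab hb
    apply Finset.sum_pos
    · intro l hl
      rw [Finset.mem_Ioc] at hl
      exact hp l (by omega) (by omega)
    · exact Finset.nonempty_Ioc.2 hab
  have hglt : ∀ a b : ℕ, a < b → b ≤ K → g a < g b := by
    intro a b hab hb
    have := hgg a b (le_of_lt hab) hb
    have := hsumpos a b hab hb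
    linarith
  have hgle : ∀ a b : ℕ, a ≤ b → b ≤ K → g a ≤ g b := by
    intro a b hab hb
    rcases eq_or_lt_of_le hab with rfl | hlt
    · exact le_rfl
    · exact le_of_lt (hglt a b hlt hb)
  have hg0 : g 0 = 0 := by
    rw [hg 0 (Nat.zero_le K)]; simp
  have hgK : g K = 1 := by rw [hg K le_rfl]; exact hp1
  have hone : ∀ j, j ≤ K → 1 - g j = ∑ l ∈ Finset.Ioc j K, p l := by
    intro j hj
    have := hgg j K hj le_rfl
    rw [hgK] at this
    linarith
  have hhval : ∀ j, j ≤ K → h j = -x (j + 1) * (1 - g j) := by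
    intro j hj
    rw [hh j hj, hone j hj, ← Finset.Icc_add_one_left_eq_Ioc]
  -- monotonicity of x
  have hxle : ∀ a b : ℕ, 1 ≤ a → a ≤ b → b ≤ K → x a ≤ x b := by
    intro a b ha hab
    induction b, hab using Nat.le_induction with
    | base => intro _; exact le_rfl
    | succ n hn ih =>
      intro hnK
      have h1 : x a ≤ x n := ih (by omega)
      have h2 : x n < x (n + 1) := hxlt n (le_trans ha hn) (by omega)
      linarith
  have hxlt2 : ∀ a b : ℕ, 1 ≤ a → a < b → b ≤ K → x a < x b := by
    intro a b ha hab hb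
    have h1 : x a < x (a + 1) := hxlt a ha (by omega)
    have h2 : x (a + 1) ≤ x b := hxle (a + 1) b (by omega) (by omega) hb
    linarith
  -- membership facts
  have hSmem : ∀ j, j ≤ K → ((g j, h j) : ℝ × ℝ) ∈ convexHull ℝ S :=
    fun j hj => subset_convexHull ℝ S ⟨j, hj, rfl⟩
  have hbar_le : ∀ j, j ≤ K → hbar j ≤ h j :=
    fun j hj => (hbar_min j hj).2 (hSmem j hj)
  -- halfplane lower-bound principle
  have hHP : ∀ c d : ℝ, (∀ j, j ≤ K → c * g j + d ≤ h j) →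
      ∀ j, j ≤ K → c * g j + d ≤ hbar j := by
    intro c d hcd j hj
    have hconv : Convex ℝ {P : ℝ × ℝ | c * P.1 + d ≤ P.2} := by
      intro P hP Q hQ a b ha hb hab
      simp only [Set.mem_setOf_eq] at *
      have e1 : (a • P + b • Q).1 = a * P.1 + b * Q.1 := rfl
      have e2 : (a • P + b • Q).2 = a * P.2 + b * Q.2 := rfl
      rw [e1, e2]
      have hb1 : b = 1 - a := by linarith
      subst hb1
      nlinarith [mul_le_mul_of_nonneg_left hP ha, mul_le_mul_of_nonneg_left hQ hb]
    have hsub : S ⊆ {P : ℝ × ℝ | c * P.1 + d ≤ P.2} := by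
      rintro P ⟨l, hl, rfl⟩
      exact hcd l hl
    exact convexHull_min hsub hconv (hbar_min j hj).1
  -- chord convexity of hbar
  have hM : ∀ a b c : ℕ, a < b → b < c → c ≤ K →
      (hbar b - hbar a) * (g c - g b) ≤ (hbar c - hbar b) * (g b - g a) := by
    intro a b c hab hbc hcK
    have ha' : a ≤ K := by omega
    have hb' : b ≤ K := by omega
    have hu : 0 < g c - g b := sub_pos.2 (hglt b c hbc hcK)
    have hv : 0 < g b - g a := sub_pos.2 (hglt a b hab (by omega))
    have hw : 0 < (g c - g b) + (g b - g a) := by linarith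
    have hab1 : ((g c - g b) / ((g c - g b) + (g b - g a)))
        + ((g b - g a) / ((g c - g b) + (g b - g a))) = 1 := by
      rw [← add_div, div_self (ne_of_gt hw)]
    have hcomb : (((g c - g b) / ((g c - g b) + (g b - g a))) • ((g a, hbar a) : ℝ × ℝ)
        + ((g b - g a) / ((g c - g b) + (g b - g a))) • ((g c, hbar c) : ℝ × ℝ))
        ∈ convexHull ℝ S :=
      (convex_convexHull ℝ S) (hbar_min a ha').1 (hbar_min c hcK).1
        (by positivity) (by positivity) hab1
    have heq : (((g c - g b) / ((g c - g b) + (g b - g a))) • ((g a, hbar a) : ℝ × ℝ)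
        + ((g b - g a) / ((g c - g b) + (g b - g a))) • ((g c, hbar c) : ℝ × ℝ))
        = (g b, ((g c - g b) * hbar a + (g b - g a) * hbar c) / ((g c - g b) + (g b - g a))) := by
      have hwne : ((g c - g b) + (g b - g a)) ≠ 0 := ne_of_gt hw
      apply Prod.ext
      · show ((g c - g b) / ((g c - g b) + (g b - g a))) * g a
          + ((g b - g a) / ((g c - g b) + (g b - g a))) * g c = g b
        rw [div_mul_eq_mul_div, div_mul_eq_mul_div, ← add_div, div_eq_iff hwne]
        ring
      · show ((g c - g b) / ((g c - g b) + (g b - g a))) * hbar a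
          + ((g b - g a) / ((g c - g b) + (g b - g a))) * hbar c
          = ((g c - g b) * hbar a + (g b - g a) * hbar c) / ((g c - g b) + (g b - g a))
        rw [div_mul_eq_mul_div, div_mul_eq_mul_div, ← add_div]
    rw [heq] at hcomb
    have hle : hbar b ≤ ((g c - g b) * hbar a + (g b - g a) * hbar c)
        / ((g c - g b) + (g b - g a)) := (hbar_min b hb').2 hcomb
    rw [le_div_iff₀ hw] at hle
    nlinarith [hle]
  -- global lower bound via the line of slope x K through (1, 0)
  have hlowK : ∀ j, j ≤ K → -(x K) * (1 - g j) ≤ hbar j := by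
    intro j hj
    have hmin : ∀ l, l ≤ K → x K * g l + (-(x K)) ≤ h l := by
      intro l hl
      rw [hhval l hl]
      rcases eq_or_lt_of_le hl with rfl | hlK
      · rw [hgK]; norm_num
      · have h1 : 0 ≤ 1 - g l := by
          have := hgle l K hl le_rfl; rw [hgK] at this; linarith
        have h2 : x (l + 1) ≤ x K := hxle (l + 1) K (by omega) (by omega) le_rfl
        nlinarith
    have := hHP (x K) (-(x K)) hmin j hj
    linarith
  have hbarK : hbar K = 0 := by
    have h1 : hbar K ≤ h K := hbar_le K le_rfl
    have h2 : h K = 0 := by rw [hhval K le_rfl, hgK]; ring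
    have h3 := hlowK K le_rfl
    rw [hgK] at h3
    nlinarith
  have hK1K : K - 1 < K := by omega
  have hK1K' : K - 1 ≤ K := by omega
  have hqK : 0 < 1 - g (K - 1) := by
    have := hglt (K - 1) K hK1K le_rfl
    rw [hgK] at this; linarith
  have hbarK1 : hbar (K - 1) = -(x K) * (1 - g (K - 1)) := by
    have h1 : hbar (K - 1) ≤ h (K - 1) := hbar_le (K - 1) hK1K'
    have h2 : h (K - 1) = -(x K) * (1 - g (K - 1)) := by
      rw [hhval (K - 1) hK1K']
      have : K - 1 + 1 = K := by omega
      rw [this]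
    have h3 := hlowK (K - 1) hK1K'
    linarith
  constructor
  · -- Part 1: wbar i < x i for 1 ≤ i ≤ K - 1
    intro i h1i hiK1
    have hiK : i < K := by omega
    have hi1K : i - 1 < K := by omega
    by_contra hcon
    push_neg at hcon
    rw [hwbar i h1i (le_of_lt hiK)] at hcon
    have hpi : 0 < g i - g (i - 1) := sub_pos.2 (hglt (i - 1) i (by omega) hiK.le)
    obtain ⟨c, hcdef⟩ : ∃ c : ℝ, c = (hbar i - hbar (i - 1)) / (g i - g (i - 1)) := ⟨_, rfl⟩
    rw [← hcdef] at hcon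
    obtain ⟨d, hddef⟩ : ∃ d : ℝ, d = hbar (i - 1) - c * g (i - 1) := ⟨_, rfl⟩
    have hAi1 : c * g (i - 1) + d = hbar (i - 1) := by rw [hddef]; ring
    have hAi : c * g i + d = hbar i := by
      have hc2 : c * (g i - g (i - 1)) = hbar i - hbar (i - 1) := by
        rw [hcdef]
        exact div_mul_cancel₀ _ (ne_of_gt hpi)
      rw [hddef]
      linarith [hc2]
    -- the line is below hbar everywhere
    have hA : ∀ j, j ≤ K → c * g j + d ≤ hbar j := by
      intro j hj
      rcases lt_trichotomy j (i - 1) with hcase | hcase | hcase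
      · have hm := hM j (i - 1) i hcase (by omega) hiK.le
        have h2 : (hbar (i - 1) - hbar j) ≤ c * (g (i - 1) - g j) := by
          rw [hcdef, div_mul_eq_mul_div, le_div_iff₀ hpi]
          nlinarith [hm]
        linarith
      · rw [hcase]; rw [hAi1]
      · rcases eq_or_lt_of_le (Nat.succ_le_of_lt hcase) with hcase2 | hcase2
        · have : j = i := by omega
          rw [this, hAi]
        · have hij : i < j := by omega
          have hm := hM (i - 1) i j (by omega) hij hj
          have h2 : c * (g j - g i) ≤ hbar j - hbar i := by
            rw [hcdef, div_mul_eq_mul_div, div_le_iff₀ hpi]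
            nlinarith [hm]
          linarith
    have hAh : ∀ j, j ≤ K → c * g j + d ≤ h j :=
      fun j hj => le_trans (hA j hj) (hbar_le j hj)
    by_cases hstrict : ∀ j, j ≤ i - 1 → c * g j + d < h j
    · -- tilting argument: strengthen the minorant, contradiction with minimality at i-1
      have hne : (Finset.range i).Nonempty := Finset.nonempty_range_iff.2 (by omega)
      obtain ⟨δ, hδpos, hδle⟩ : ∃ δ : ℝ, 0 < δ ∧ ∀ j, j < i → δ ≤ h j - (c * g j + d) := by
        refine ⟨(Finset.range i).inf' hne (fun j => h j - (c * g j + d)), ?_, ?_⟩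
        · rw [Finset.lt_inf'_iff]
          intro j hjr
          rw [Finset.mem_range] at hjr
          have := hstrict j (by omega)
          linarith
        · intro j hji
          exact Finset.inf'_le _ (Finset.mem_range.2 hji)
      have hmin' : ∀ j, j ≤ K → (c - δ) * g j + (d + δ * g i) ≤ h j := by
        intro j hj
        have hkey : (c - δ) * g j + (d + δ * g i) = (c * g j + d) + δ * (g i - g j) := by ring
        rw [hkey]
        rcases Nat.lt_or_ge j i with hji | hji
        · have h1 : g i - g j ≤ 1 := by
            have e1 : g i ≤ 1 := by
              have := hgle i K hiK.le le_rfl; rw [hgK] at this; exact this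
            have e2 : 0 ≤ g j := by
              have := hgle 0 j (Nat.zero_le j) hj; rw [hg0] at this; linarith
            linarith
          have h2 : 0 ≤ g i - g j := by
            have := hgle j i (le_of_lt hji) hiK.le; linarith
          have h3 : δ * (g i - g j) ≤ δ := by
            have := mul_le_mul_of_nonneg_left h1 (le_of_lt hδpos)
            simpa using this
          have := hδle j hji
          linarith
        · have h1 : g i ≤ g j := hgle i j hji hj
          have h2 : δ * (g i - g j) ≤ 0 := by
            have := mul_le_mul_of_nonneg_left (show g i - g j ≤ (0:ℝ) by linarith)
              (le_of_lt hδpos)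
            simpa using this
          have := hAh j hj
          linarith
      have hcontr := hHP (c - δ) (d + δ * g i) hmin' (i - 1) (by omega)
      have : (c - δ) * g (i - 1) + (d + δ * g i)
          = hbar (i - 1) + δ * (g i - g (i - 1)) := by
        rw [← hAi1]; ring
      rw [this] at hcontr
      linarith [mul_pos hδpos hpi]
    · -- touching case: the line passes through some point (g j0, h j0), j0 ≤ i-1
      push_neg at hstrict
      obtain ⟨j0, hj0i, hj0touch⟩ := hstrict
      have hj0K : j0 ≤ K := by omega
      have htouch : c * g j0 + d = h j0 := le_antisymm (hAh j0 hj0K) hj0touch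
      have hq0 : 0 < 1 - g j0 := by
        have := hglt j0 K (by omega) le_rfl
        rw [hgK] at this; linarith
      -- from the line being below (1, 0): c ≤ x (j0+1)
      have hAK : c * g K + d ≤ hbar K := hA K le_rfl
      rw [hgK, hbarK] at hAK
      have he0 : h j0 = -x (j0 + 1) * (1 - g j0) := hhval j0 hj0K
      have hcle : c ≤ x (j0 + 1) := by
        have h1 : c * (1 - g j0) ≤ x (j0 + 1) * (1 - g j0) := by
          have h2 : c * (1 - g j0) ≤ -h j0 := by linarith
          rw [he0] at h2
          linarith
        exact le_of_mul_le_mul_right h1 hq0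
      have hxj0 : x (j0 + 1) ≤ x i := hxle (j0 + 1) i (by omega) (by omega) hiK.le
      have hceq : c = x (j0 + 1) := le_antisymm hcle (by linarith)
      -- line evaluated at K-1 vs hbar (K-1) gives contradiction
      have hAK1 : c * g (K - 1) + d ≤ hbar (K - 1) := hA (K - 1) hK1K'
      rw [hbarK1] at hAK1
      have hd : d = h j0 - c * g j0 := by linarith
      rw [hd, he0, hceq] at hAK1
      have hfin : x K ≤ x (j0 + 1) := by
        have h1 : x K * (1 - g (K - 1)) ≤ x (j0 + 1) * (1 - g (K - 1)) := by linarith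
        exact le_of_mul_le_mul_right h1 hqK
      have : x i < x K := hxlt2 i K h1i hiK le_rfl
      linarith
  · -- Part 2: wbar K = x K
    rw [hwbar K hK le_rfl, hbarK, hbarK1]
    have hgdiff : g K - g (K - 1) = 1 - g (K - 1) := by rw [hgK]
    rw [hgdiff]
    field_simp
    ring
end

section
/- Fix 1 ≤ i ≤ K−1 and define, for every real c < x^i, Ψ_i(c) = (max_{1≤k≤K} (x^k − c)·(Σ_{j=k}^K p^j)) / (x^i − c). Then w̄^i < x^i, Ψ_i(w̄^i) ≤ Ψ_i(c) for every c < x^i, and every c < x^i with Ψ_i(c) = Ψ_i(w̄^i) satisfies c ≤ w̄^i; that is, w̄^i is the largest minimizer of Ψ_i on (−∞, x^i). -/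
set_option maxHeartbeats 2000000


/-- For fixed 1 ≤ i ≤ K−1 and
Ψ_i(c) = (max_{1≤k≤K} (x^k − c)·Σ_{j=k}^K p^j)/(x^i − c), the MVV w̄^i is the
largest minimizer of Ψ_i on (−∞, x^i). -/
theorem stmt_12 (K : ℕ) (hK : 1 ≤ K) (x p : ℕ → ℝ)
    (hx0 : 0 ≤ x 1)
    (hxlt : ∀ i, 1 ≤ i → i < K → x i < x (i + 1))
    (hp : ∀ i, 1 ≤ i → i ≤ K → 0 < p i)
    (hp1 : ∑ i ∈ Finset.Icc 1 K, p i = 1)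
    (g h hbar wbar : ℕ → ℝ)
    (hg : ∀ i ≤ K, g i = ∑ j ∈ Finset.Icc 1 i, p j)
    (hh : ∀ i ≤ K, h i = -x (i + 1) * ∑ j ∈ Finset.Icc (i + 1) K, p j)
    (hbar_min : ∀ i ≤ K, IsLeast {y : ℝ |
        ((g i, y) : ℝ × ℝ) ∈ convexHull ℝ {P : ℝ × ℝ | ∃ j ≤ K, P = (g j, h j)}}
      (hbar i))
    (hwbar : ∀ i, 1 ≤ i → i ≤ K →
      wbar i = (hbar i - hbar (i - 1)) / (g i - g (i - 1)))
    (i : ℕ) (hi1 : 1 ≤ i) (hi2 : i ≤ K - 1)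
    (Ψ : ℝ → ℝ)
    (hΨ : ∀ c, Ψ c = ((Finset.Icc 1 K).sup' (Finset.nonempty_Icc.mpr hK)
      (fun k => (x k - c) * ∑ j ∈ Finset.Icc k K, p j)) / (x i - c)) :
    wbar i < x i ∧
    (∀ c, c < x i → Ψ (wbar i) ≤ Ψ c) ∧
    (∀ c, c < x i → Ψ c = Ψ (wbar i) → c ≤ wbar i) := by
  have hiK : i < K := by omega
  have hi1K : i ≤ K := le_of_lt hiK
  -- monotonicity of x on [1, K]
  have hxmono : ∀ j k : ℕ, 1 ≤ j → j ≤ k → k ≤ K → x j ≤ x k := by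
    intro j k hj hjk hk
    induction k with
    | zero => omega
    | succ n ih =>
      rcases Nat.eq_or_lt_of_le hjk with heq | hlt
      · rw [heq]
      · have h1 : j ≤ n := by omega
        exact le_trans (ih h1 (by omega)) (le_of_lt (hxlt n (by omega) (by omega)))
  have hxstrict : ∀ j k : ℕ, 1 ≤ j → j < k → k ≤ K → x j < x k := by
    intro j k hj hjk hk
    have h1 : k - 1 + 1 = k := by omega
    have h2 := hxlt (k - 1) (by omega) (by omega)
    rw [h1] at h2
    exact lt_of_le_of_lt (hxmono j (k - 1) hj (by omega) (by omega)) h2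
  -- positivity of tail sums
  have hSpos : ∀ k, 1 ≤ k → k ≤ K → 0 < ∑ j ∈ Finset.Icc k K, p j := by
    intro k hk1 hk2
    apply Finset.sum_pos
    · intro j hj
      rw [Finset.mem_Icc] at hj
      exact hp j (by omega) hj.2
    · exact Finset.nonempty_Icc.mpr hk2
  -- splitting sums
  have hgS : ∀ k, k ≤ K → g k + ∑ j ∈ Finset.Icc (k + 1) K, p j = 1 := by
    intro k hk
    rw [hg k hk, ← hp1,
      show Finset.Icc 1 k = Finset.Ioc 0 k from Finset.Icc_add_one_left_eq_Ioc 0 k,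
      show Finset.Icc (k + 1) K = Finset.Ioc k K from Finset.Icc_add_one_left_eq_Ioc k K,
      show Finset.Icc 1 K = Finset.Ioc 0 K from Finset.Icc_add_one_left_eq_Ioc 0 K]
    exact Finset.sum_Ioc_consecutive _ (Nat.zero_le k) hk
  have hgsplit : ∀ a b : ℕ, a ≤ b → b ≤ K → g b = g a + ∑ j ∈ Finset.Ioc a b, p j := by
    intro a b hab hb
    rw [hg b hb, hg a (le_trans hab hb),
      show Finset.Icc 1 b = Finset.Ioc 0 b from Finset.Icc_add_one_left_eq_Ioc 0 b,
      show Finset.Icc 1 a = Finset.Ioc 0 a from Finset.Icc_add_one_left_eq_Ioc 0 a,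
      ← Finset.sum_Ioc_consecutive _ (Nat.zero_le a) hab]
  have hgmono : ∀ a b : ℕ, a ≤ b → b ≤ K → g a ≤ g b := by
    intro a b hab hb
    rw [hgsplit a b hab hb]
    have : 0 ≤ ∑ j ∈ Finset.Ioc a b, p j := Finset.sum_nonneg fun j hj => by
      rw [Finset.mem_Ioc] at hj
      exact le_of_lt (hp j (by omega) (by omega))
    linarith
  have hgstrict : ∀ a b : ℕ, a < b → b ≤ K → g a < g b := by
    intro a b hab hb
    rw [hgsplit a b (le_of_lt hab) hb]
    have : 0 < ∑ j ∈ Finset.Ioc a b, p j := by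
      apply Finset.sum_pos
      · intro j hj
        rw [Finset.mem_Ioc] at hj
        exact hp j (by omega) (by omega)
      · exact Finset.nonempty_Ioc.mpr hab
    linarith
  -- key identity for the terms in the sup
  have hterm : ∀ k, 1 ≤ k → k ≤ K → ∀ c : ℝ,
      (x k - c) * ∑ j ∈ Finset.Icc k K, p j = -(h (k - 1)) + c * g (k - 1) - c := by
    intro k hk1 hk2 c
    have hk' : k - 1 + 1 = k := by omega
    have e1 := hh (k - 1) (by omega)
    rw [hk'] at e1
    have e2 := hgS (k - 1) (by omega)
    rw [hk'] at e2
    rw [e1]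
    linear_combination (-c) * e2
  -- choose the pair (a, b) minimizing the chord height at the midpoint gm
  have hgm0 : g (i - 1) < g i := hgstrict (i - 1) i (by omega) hi1K
  obtain ⟨gm, hgmdef⟩ : ∃ gm : ℝ, gm = (g (i - 1) + g i) / 2 := ⟨_, rfl⟩
  obtain ⟨q, hq, hqmin⟩ := Finset.exists_min_image
    ((Finset.Icc 0 (i - 1)) ×ˢ (Finset.Icc i K))
    (fun q : ℕ × ℕ => h q.1 + (h q.2 - h q.1) * (gm - g q.1) / (g q.2 - g q.1))
    ⟨(0, i), by simp [Finset.mem_product, Finset.mem_Icc, hi1K]⟩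
  obtain ⟨a, b⟩ := q
  rw [Finset.mem_product, Finset.mem_Icc, Finset.mem_Icc] at hq
  obtain ⟨⟨-, ha1⟩, hb1, hb2⟩ := hq
  simp only at hqmin
  have hab : a < b := by omega
  have hgab : g a < g b := hgstrict a b hab hb2
  have hgabne : g b - g a ≠ 0 := ne_of_gt (by linarith)
  dsimp only at ha1 hb1 hb2 hqmin
  have hga_m : g a ≤ g (i - 1) := hgmono a (i - 1) ha1 (by omega)
  have hgb_m : g i ≤ g b := hgmono i b hb1 hb2
  have hgm1 : g (i - 1) < gm := by rw [hgmdef]; linarith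
  have hgm2 : gm < g i := by rw [hgmdef]; linarith
  obtain ⟨w', hw'⟩ : ∃ w' : ℝ, w' = (h b - h a) / (g b - g a) := ⟨_, rfl⟩
  obtain ⟨d', hd'⟩ : ∃ d' : ℝ, d' = h a - w' * g a := ⟨_, rfl⟩
  have hla : w' * g a + d' = h a := by rw [hd']; ring
  have hlb : w' * g b + d' = h b := by
    rw [hd', hw']
    field_simp
    ring
  have hfq : h a + (h b - h a) * (gm - g a) / (g b - g a) = w' * gm + d' := by
    rw [hd', hw']
    field_simp
    ring
  -- the chosen chord supports all the points
  have hsupp : ∀ k, k ≤ K → w' * g k + d' ≤ h k := by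
    intro k hk
    by_contra hcon
    push_neg at hcon
    rcases le_or_gt k (i - 1) with hki | hki
    · have hmem : (k, b) ∈ (Finset.Icc 0 (i - 1)) ×ˢ (Finset.Icc i K) := by
        simp [Finset.mem_product, Finset.mem_Icc, hki, hb1, hb2]
      have hle := hqmin (k, b) hmem
      simp only at hle
      rw [hfq] at hle
      have hgk1 : g k ≤ g (i - 1) := hgmono k (i - 1) hki (by omega)
      have hgkm : g k < gm := lt_of_le_of_lt hgk1 hgm1
      have hgmb : gm < g b := lt_of_lt_of_le hgm2 hgb_m
      have hD : (0 : ℝ) < g b - g k := by linarith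
      have key : h k + (h b - h k) * (gm - g k) / (g b - g k) < w' * gm + d' := by
        rw [show h k + (h b - h k) * (gm - g k) / (g b - g k) =
            (h k * (g b - g k) + (h b - h k) * (gm - g k)) / (g b - g k) by
          field_simp, div_lt_iff₀ hD]
        nlinarith [mul_pos (sub_pos.mpr hcon) (sub_pos.mpr hgmb), hlb]
      linarith
    · have hki' : i ≤ k := by omega
      have hmem : (a, k) ∈ (Finset.Icc 0 (i - 1)) ×ˢ (Finset.Icc i K) := by
        simp [Finset.mem_product, Finset.mem_Icc, ha1, hki', hk]
      have hle := hqmin (a, k) hmem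
      simp only at hle
      rw [hfq] at hle
      have hgk1 : g i ≤ g k := hgmono i k hki' hk
      have hgkm : gm < g k := lt_of_lt_of_le hgm2 hgk1
      have hgma : g a < gm := lt_of_le_of_lt hga_m hgm1
      have hD : (0 : ℝ) < g k - g a := by linarith
      have key : h a + (h k - h a) * (gm - g a) / (g k - g a) < w' * gm + d' := by
        rw [show h a + (h k - h a) * (gm - g a) / (g k - g a) =
            (h a * (g k - g a) + (h k - h a) * (gm - g a)) / (g k - g a) by
          field_simp, div_lt_iff₀ hD]
        nlinarith [mul_pos (sub_pos.mpr hcon) (sub_pos.mpr hgma), hla]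
      linarith
  -- the chord coincides with hbar on [a, b]
  have hseg : ∀ m, a ≤ m → m ≤ b → hbar m ≤ w' * g m + d' := by
    intro m hma hmb
    have hmK : m ≤ K := le_trans hmb hb2
    have hgam : g a ≤ g m := hgmono a m hma hmK
    have hgmb : g m ≤ g b := hgmono m b hmb hb2
    have hPa : ((g a, h a) : ℝ × ℝ) ∈ {P : ℝ × ℝ | ∃ j ≤ K, P = (g j, h j)} :=
      ⟨a, by omega, rfl⟩
    have hPb : ((g b, h b) : ℝ × ℝ) ∈ {P : ℝ × ℝ | ∃ j ≤ K, P = (g j, h j)} :=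
      ⟨b, hb2, rfl⟩
    have ht0 : 0 ≤ (g m - g a) / (g b - g a) := div_nonneg (by linarith) (by linarith)
    have ht1 : (g m - g a) / (g b - g a) ≤ 1 := by
      rw [div_le_one (by linarith)]; linarith
    have hcomb := (convex_convexHull ℝ {P : ℝ × ℝ | ∃ j ≤ K, P = (g j, h j)})
      (subset_convexHull ℝ _ hPa) (subset_convexHull ℝ _ hPb)
      (by linarith : (0 : ℝ) ≤ 1 - (g m - g a) / (g b - g a)) ht0 (by ring)
    have heq : (1 - (g m - g a) / (g b - g a)) • ((g a, h a) : ℝ × ℝ)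
        + ((g m - g a) / (g b - g a)) • ((g b, h b) : ℝ × ℝ)
        = ((g m, w' * g m + d') : ℝ × ℝ) := by
      simp only [Prod.smul_mk, smul_eq_mul, Prod.mk_add_mk, Prod.mk.injEq]
      constructor
      · field_simp
        ring
      · rw [hd', hw']
        field_simp
        ring
    rw [heq] at hcomb
    exact (hbar_min m hmK).2 hcomb
  have hlineB : ∀ m, m ≤ K → w' * g m + d' ≤ hbar m := by
    intro m hm
    have hsub : convexHull ℝ {P : ℝ × ℝ | ∃ j ≤ K, P = (g j, h j)} ⊆
        {P : ℝ × ℝ | w' * P.1 + d' ≤ P.2} := by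
      apply convexHull_min
      · rintro P ⟨j, hj, rfl⟩
        exact hsupp j hj
      · have hlin : IsLinearMap ℝ (fun P : ℝ × ℝ => P.2 - w' * P.1) := by
          constructor
          · intro u v
            simp only [Prod.fst_add, Prod.snd_add]
            ring
          · intro r u
            simp only [Prod.smul_fst, Prod.smul_snd, smul_eq_mul]
            ring
        have hcvx := convex_halfSpace_ge hlin d'
        have hset : {P : ℝ × ℝ | w' * P.1 + d' ≤ P.2}
            = {P : ℝ × ℝ | d' ≤ (fun P : ℝ × ℝ => P.2 - w' * P.1) P} := by
          ext P
          simp only [Set.mem_setOf_eq]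
          constructor <;> intro hx <;> linarith
        rw [hset]
        exact hcvx
    exact hsub (hbar_min m hm).1
  have hbm1 : hbar (i - 1) = w' * g (i - 1) + d' :=
    le_antisymm (hseg (i - 1) ha1 (by omega)) (hlineB (i - 1) (by omega))
  have hbmi : hbar i = w' * g i + d' :=
    le_antisymm (hseg i (by omega) hb1) (hlineB i hi1K)
  have hwv : wbar i = w' := by
    rw [hwbar i hi1 hi1K, hbm1, hbmi]
    have hne : g i - g (i - 1) ≠ 0 := ne_of_gt (sub_pos.mpr hgm0)
    rw [div_eq_iff hne]
    ring
  -- b < K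
  have hhK : h K = 0 := by
    rw [hh K le_rfl, Finset.Icc_eq_empty (by omega), Finset.sum_empty, mul_zero]
  have hgK : g K = 1 := by rw [hg K le_rfl]; exact hp1
  have hbK : b < K := by
    rcases Nat.lt_or_ge b K with hlt | hge
    · exact hlt
    · exfalso
      have hbKeq : b = K := by omega
      have e1 := hh a (by omega)
      have e2 := hgS a (by omega)
      have e3 := hh i hi1K
      have e4 := hgS i hi1K
      have hSa : 0 < ∑ j ∈ Finset.Icc (a + 1) K, p j := hSpos (a + 1) (by omega) (by omega)
      have hSi1 : 0 < ∑ j ∈ Finset.Icc (i + 1) K, p j := hSpos (i + 1) (by omega) (by omega)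
      have hxia : x (a + 1) < x (i + 1) := hxstrict (a + 1) (i + 1) (by omega) (by omega) (by omega)
      have hsi := hsupp i hi1K
      have hlb' := hlb
      rw [hbKeq, hgK, hhK] at hlb'
      have hd2 : d' = -w' := by linarith
      have h8 : w' * (∑ j ∈ Finset.Icc (a + 1) K, p j) =
          x (a + 1) * ∑ j ∈ Finset.Icc (a + 1) K, p j := by
        linear_combination (-1 : ℝ) * hla - e1 + w' * e2 + hd2
      have e4w : w' * g i = w' - w' * ∑ j ∈ Finset.Icc (i + 1) K, p j := by
        linear_combination w' * e4
      have h9 : x (i + 1) * (∑ j ∈ Finset.Icc (i + 1) K, p j) ≤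
          w' * ∑ j ∈ Finset.Icc (i + 1) K, p j := by
        nlinarith [hsi, e4w, e3, hd2]
      have hw'a : w' = x (a + 1) := mul_right_cancel₀ (ne_of_gt hSa) h8
      nlinarith [mul_lt_mul_of_pos_right hxia hSi1, h9, hw'a]
  -- abbreviations for the final computation
  have eA : ∀ c : ℝ, (x (a + 1) - c) * ∑ j ∈ Finset.Icc (a + 1) K, p j
      = -(h a) + c * g a - c := by
    intro c
    have := hterm (a + 1) (by omega) (by omega) c
    simpa using this
  have eB : ∀ c : ℝ, (x (b + 1) - c) * ∑ j ∈ Finset.Icc (b + 1) K, p j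
      = -(h b) + c * g b - c := by
    intro c
    have := hterm (b + 1) (by omega) (by omega) c
    simpa using this
  obtain ⟨M, hMdef⟩ : ∃ M : ℝ → ℝ, M = fun c => (Finset.Icc 1 K).sup'
      (Finset.nonempty_Icc.mpr hK)
      (fun k => (x k - c) * ∑ j ∈ Finset.Icc k K, p j) := ⟨_, rfl⟩
  have hΨM : ∀ c, Ψ c = M c / (x i - c) := by
    intro c
    rw [hΨ c, hMdef]
  have hMle : ∀ k ∈ Finset.Icc 1 K,
      (x k - w') * ∑ j ∈ Finset.Icc k K, p j ≤ -(h a) + w' * g a - w' := by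
    intro k hk
    rw [Finset.mem_Icc] at hk
    rw [hterm k hk.1 hk.2 w']
    have hs := hsupp (k - 1) (by omega)
    linarith
  have hMw_ub : M w' ≤ -(h a) + w' * g a - w' := by
    rw [hMdef]; exact Finset.sup'_le _ _ hMle
  have hMa : ∀ c : ℝ, -(h a) + c * g a - c ≤ M c := by
    intro c
    rw [← eA c, hMdef]
    exact Finset.le_sup' (f := fun k => (x k - c) * ∑ j ∈ Finset.Icc k K, p j)
      (Finset.mem_Icc.mpr ⟨by omega, by omega⟩)
  have hMb : ∀ c : ℝ, -(h b) + c * g b - c ≤ M c := by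
    intro c
    rw [← eB c, hMdef]
    exact Finset.le_sup' (f := fun k => (x k - c) * ∑ j ∈ Finset.Icc k K, p j)
      (Finset.mem_Icc.mpr ⟨by omega, by omega⟩)
  have hMw : M w' = -(h a) + w' * g a - w' := le_antisymm hMw_ub (hMa w')
  have hMwA : M w' = (x (a + 1) - w') * ∑ j ∈ Finset.Icc (a + 1) K, p j := by
    rw [hMw]; exact (eA w').symm
  have hMwB : M w' = (x (b + 1) - w') * ∑ j ∈ Finset.Icc (b + 1) K, p j := by
    rw [hMw, eB w']
    linarith [hla, hlb]
  -- numeric facts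
  have hSa : 0 < ∑ j ∈ Finset.Icc (a + 1) K, p j := hSpos (a + 1) (by omega) (by omega)
  have hSb : 0 < ∑ j ∈ Finset.Icc (b + 1) K, p j := hSpos (b + 1) (by omega) (by omega)
  have hxai : x (a + 1) ≤ x i := hxmono (a + 1) i (by omega) (by omega) hi1K
  have hxib : x i < x (b + 1) := hxstrict i (b + 1) hi1 (by omega) (by omega)
  -- Goal 1 : w' < x i
  have goal1 : w' < x i := by
    have ega := hh a (by omega)
    have ega2 := hgS a (by omega)
    have egb := hh b hb2
    have egb2 := hgS b hb2
    rw [hw', div_lt_iff₀ (by linarith : (0 : ℝ) < g b - g a)]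
    have e5 : x i * (g b - g a) = x i * (∑ j ∈ Finset.Icc (a + 1) K, p j)
        - x i * ∑ j ∈ Finset.Icc (b + 1) K, p j := by
      linear_combination x i * egb2 - x i * ega2
    nlinarith [mul_pos hSb (sub_pos.mpr hxib),
      mul_nonneg (le_of_lt hSa) (sub_nonneg.mpr hxai), ega, egb, e5]
  have hxw : w' < x i := goal1
  -- the main comparison
  have key1 : ∀ c : ℝ, c < x i → M w' * (x i - c) ≤ M c * (x i - w') := by
    intro c hc
    rcases le_or_gt c w' with hcw | hcw
    · have h1 : (x (a + 1) - c) * (∑ j ∈ Finset.Icc (a + 1) K, p j) ≤ M c := by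
        rw [eA c]; exact hMa c
      have h3 : (x (a + 1) - w') * (∑ j ∈ Finset.Icc (a + 1) K, p j) * (x i - c) ≤
          (x (a + 1) - c) * (∑ j ∈ Finset.Icc (a + 1) K, p j) * (x i - w') := by
        nlinarith [mul_nonneg (mul_nonneg (le_of_lt hSa) (sub_nonneg.mpr hcw))
          (sub_nonneg.mpr hxai)]
      have h4 : (x (a + 1) - c) * (∑ j ∈ Finset.Icc (a + 1) K, p j) * (x i - w') ≤
          M c * (x i - w') := mul_le_mul_of_nonneg_right h1 (by linarith)
      rw [hMwA]
      linarith
    · have h1 : (x (b + 1) - c) * (∑ j ∈ Finset.Icc (b + 1) K, p j) ≤ M c := by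
        rw [eB c]; exact hMb c
      have h3 : (x (b + 1) - w') * (∑ j ∈ Finset.Icc (b + 1) K, p j) * (x i - c) ≤
          (x (b + 1) - c) * (∑ j ∈ Finset.Icc (b + 1) K, p j) * (x i - w') := by
        nlinarith [mul_nonneg (mul_nonneg (le_of_lt hSb) (le_of_lt (sub_pos.mpr hcw)))
          (le_of_lt (sub_pos.mpr hxib))]
      have h4 : (x (b + 1) - c) * (∑ j ∈ Finset.Icc (b + 1) K, p j) * (x i - w') ≤
          M c * (x i - w') := mul_le_mul_of_nonneg_right h1 (by linarith)
      rw [hMwB]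
      linarith
  have key2 : ∀ c : ℝ, c < x i → w' < c → M w' * (x i - c) < M c * (x i - w') := by
    intro c hc hcw
    have h1 : (x (b + 1) - c) * (∑ j ∈ Finset.Icc (b + 1) K, p j) ≤ M c := by
      rw [eB c]; exact hMb c
    have h3 : (x (b + 1) - w') * (∑ j ∈ Finset.Icc (b + 1) K, p j) * (x i - c) <
        (x (b + 1) - c) * (∑ j ∈ Finset.Icc (b + 1) K, p j) * (x i - w') := by
      nlinarith [mul_pos (mul_pos hSb (sub_pos.mpr hcw)) (sub_pos.mpr hxib)]
    have h4 : (x (b + 1) - c) * (∑ j ∈ Finset.Icc (b + 1) K, p j) * (x i - w') ≤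
        M c * (x i - w') := mul_le_mul_of_nonneg_right h1 (by linarith)
    rw [hMwB]
    linarith
  refine ⟨by rw [hwv]; exact goal1, ?_, ?_⟩
  · intro c hc
    rw [hwv, hΨM w', hΨM c, div_le_div_iff₀ (by linarith) (by linarith)]
    exact key1 c hc
  · intro c hc heq
    rw [hwv]
    by_contra hcon
    push_neg at hcon
    have hlt := key2 c hc hcon
    rw [hΨM c, hwv, hΨM w'] at heq
    have h5 : M w' / (x i - w') < M c / (x i - c) := by
      rw [div_lt_div_iff₀ (by linarith) (by linarith)]
      exact hlt
    exact (ne_of_gt h5) heq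
end

section
/- Suppose the hazard rate order holds: for all 1 ≤ j ≤ i ≤ K, (Σ_{l=i}^K p_s^l)·(Σ_{l=j}^K p_t^l) ≤ (Σ_{l=i}^K p_t^l)·(Σ_{l=j}^K p_s^l). Then the monotone virtual valuations satisfy w̄_s^i ≥ w̄_t^i for all 1 ≤ i ≤ K. -/
private lemma tele14 (F : ℕ → ℝ) : ∀ a b : ℕ, a ≤ b →
    F b - F a = ∑ l ∈ Finset.Ico a b, (F (l + 1) - F l) := by
  intro a b hab
  induction b with
  | zero => have : a = 0 := by omega
            subst this; simp
  | succ b ih =>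
    rcases Nat.eq_or_lt_of_le hab with h | h
    · rw [← h]; simp
    · have hab' : a ≤ b := by omega
      rw [Finset.sum_Ico_succ_top hab', ← ih hab']; ring

private lemma chord_le14 (F G : ℕ → ℝ) (w : ℝ) (a b : ℕ) (hab : a ≤ b)
    (h : ∀ l, a ≤ l → l < b → F (l + 1) - F l ≤ w * (G (l + 1) - G l)) :
    F b - F a ≤ w * (G b - G a) := by
  rw [tele14 F a b hab, tele14 G a b hab, Finset.mul_sum]
  exact Finset.sum_le_sum fun l hl =>
    h l (Finset.mem_Ico.mp hl).1 (Finset.mem_Ico.mp hl).2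

private lemma chord_ge14 (F G : ℕ → ℝ) (w : ℝ) (a b : ℕ) (hab : a ≤ b)
    (h : ∀ l, a ≤ l → l < b → w * (G (l + 1) - G l) ≤ F (l + 1) - F l) :
    w * (G b - G a) ≤ F b - F a := by
  rw [tele14 F a b hab, tele14 G a b hab, Finset.mul_sum]
  exact Finset.sum_le_sum fun l hl =>
    h l (Finset.mem_Ico.mp hl).1 (Finset.mem_Ico.mp hl).2

private lemma Glt14 {K : ℕ} {G : ℕ → ℝ} (hG : ∀ j, j < K → G j < G (j + 1)) :
    ∀ a b : ℕ, a < b → b ≤ K → G a < G b := by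
  intro a b hab hbK
  induction b with
  | zero => omega
  | succ b ih =>
    rcases Nat.lt_succ_iff_lt_or_eq.mp hab with h | h
    · exact (ih h (by omega)).trans (hG b (by omega))
    · rw [h]; exact hG b (by omega)

private lemma Gle14 {K : ℕ} {G : ℕ → ℝ} (hG : ∀ j, j < K → G j < G (j + 1)) :
    ∀ a b : ℕ, a ≤ b → b ≤ K → G a ≤ G b := by
  intro a b hab hbK
  rcases Nat.eq_or_lt_of_le hab with h | h
  · rw [h]
  · exact (Glt14 hG a b h hbK).le

private lemma mem_hullpt14 {K : ℕ} {G H : ℕ → ℝ} {j : ℕ} (hj : j ≤ K) :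
    ((G j, H j) : ℝ × ℝ) ∈
      convexHull ℝ {P : ℝ × ℝ | ∃ m ≤ K, P = (G m, H m)} :=
  subset_convexHull ℝ _ ⟨j, hj, rfl⟩

private lemma env_le14 {K : ℕ} {G H Hb : ℕ → ℝ}
    (hmin : ∀ i ≤ K, IsLeast {y : ℝ |
      ((G i, y) : ℝ × ℝ) ∈ convexHull ℝ {P : ℝ × ℝ | ∃ j ≤ K, P = (G j, H j)}}
      (Hb i)) {j : ℕ} (hj : j ≤ K) : Hb j ≤ H j :=
  (hmin j hj).2 (mem_hullpt14 hj)

private lemma env_lb14 {K : ℕ} {G H Hb : ℕ → ℝ}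
    (hmin : ∀ i ≤ K, IsLeast {y : ℝ |
      ((G i, y) : ℝ × ℝ) ∈ convexHull ℝ {P : ℝ × ℝ | ∃ j ≤ K, P = (G j, H j)}}
      (Hb i)) (c d : ℝ) (hcd : ∀ m ≤ K, c * G m + d ≤ H m) {j : ℕ} (hj : j ≤ K) :
    c * G j + d ≤ Hb j := by
  have hsub : convexHull ℝ {P : ℝ × ℝ | ∃ m ≤ K, P = (G m, H m)} ⊆
      {P : ℝ × ℝ | c * P.1 + d ≤ P.2} := by
    apply convexHull_min
    · rintro P ⟨m, hm, rfl⟩; exact hcd m hm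
    · intro P hP Q hQ α β hα hβ hs
      simp only [Set.mem_setOf_eq] at *
      have h1 : (α • P + β • Q).1 = α * P.1 + β * Q.1 := by simp
      have h2 : (α • P + β • Q).2 = α * P.2 + β * Q.2 := by simp
      rw [h1, h2]
      have hd : α * d + β * d = d := by rw [← add_mul, hs, one_mul]
      nlinarith [mul_le_mul_of_nonneg_left hP hα, mul_le_mul_of_nonneg_left hQ hβ]
  exact hsub ((hmin j hj).1)

private lemma env_zero14 {K : ℕ} {G H Hb : ℕ → ℝ} (hK : 1 ≤ K)
    (hG : ∀ j, j < K → G j < G (j + 1))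
    (hmin : ∀ i ≤ K, IsLeast {y : ℝ |
      ((G i, y) : ℝ × ℝ) ∈ convexHull ℝ {P : ℝ × ℝ | ∃ j ≤ K, P = (G j, H j)}}
      (Hb i)) : Hb 0 = H 0 := by
  refine le_antisymm (env_le14 hmin (by omega)) ?_
  have hne : (Finset.Icc 1 K).Nonempty := ⟨1, by simp [hK]⟩
  set c : ℝ := (Finset.Icc 1 K).inf' hne (fun m => (H m - H 0) / (G m - G 0)) with hc
  have h := env_lb14 hmin c (H 0 - c * G 0) ?_ (Nat.zero_le K)
  · linarith
  · intro m hm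
    rcases Nat.eq_zero_or_pos m with rfl | hm1
    · linarith
    · have hGm : G 0 < G m := Glt14 hG 0 m (by omega) hm
      have hle : c ≤ (H m - H 0) / (G m - G 0) :=
        Finset.inf'_le _ (by simp [Finset.mem_Icc]; omega)
      rw [le_div_iff₀ (by linarith)] at hle
      linarith

private lemma env_K14 {K : ℕ} {G H Hb : ℕ → ℝ} (hK : 1 ≤ K)
    (hG : ∀ j, j < K → G j < G (j + 1))
    (hmin : ∀ i ≤ K, IsLeast {y : ℝ |
      ((G i, y) : ℝ × ℝ) ∈ convexHull ℝ {P : ℝ × ℝ | ∃ j ≤ K, P = (G j, H j)}}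
      (Hb i)) : Hb K = H K := by
  refine le_antisymm (env_le14 hmin le_rfl) ?_
  have hne : (Finset.range K).Nonempty := ⟨0, by simp; omega⟩
  set c : ℝ := (Finset.range K).sup' hne (fun m => (H K - H m) / (G K - G m)) with hc
  have h := env_lb14 hmin c (H K - c * G K) ?_ (le_refl K)
  · linarith
  · intro m hm
    rcases Nat.eq_or_lt_of_le hm with rfl | hm1
    · linarith
    · have hGm : G m < G K := Glt14 hG m K hm1 le_rfl
      have hle : (H K - H m) / (G K - G m) ≤ c :=
        Finset.le_sup' (fun m => (H K - H m) / (G K - G m)) (Finset.mem_range.mpr hm1)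
      rw [div_le_iff₀ (by linarith)] at hle
      linarith

private lemma env_convex14 {K : ℕ} {G H Hb : ℕ → ℝ}
    (hG : ∀ j, j < K → G j < G (j + 1))
    (hmin : ∀ i ≤ K, IsLeast {y : ℝ |
      ((G i, y) : ℝ × ℝ) ∈ convexHull ℝ {P : ℝ × ℝ | ∃ j ≤ K, P = (G j, H j)}}
      (Hb i)) (a : ℕ) (ha : a + 2 ≤ K) :
    (Hb (a + 1) - Hb a) / (G (a + 1) - G a) ≤
      (Hb (a + 2) - Hb (a + 1)) / (G (a + 2) - G (a + 1)) := by
  have he1 : (0:ℝ) < G (a + 1) - G a := by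
    have := hG a (by omega); linarith
  have he2 : (0:ℝ) < G (a + 2) - G (a + 1) := by
    have := hG (a + 1) (by omega); linarith
  set θ : ℝ := (G (a + 2) - G (a + 1)) / (G (a + 2) - G a) with hθ
  have hsum : (0:ℝ) < G (a + 2) - G a := by linarith
  have hθ0 : 0 ≤ θ := by positivity
  have hθ1 : 0 ≤ 1 - θ := by
    rw [hθ, sub_nonneg, div_le_one hsum]; linarith
  have hmem : θ • ((G a, Hb a) : ℝ × ℝ) + (1 - θ) • ((G (a + 2), Hb (a + 2)) : ℝ × ℝ) ∈
      convexHull ℝ {P : ℝ × ℝ | ∃ j ≤ K, P = (G j, H j)} :=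
    (convex_convexHull ℝ _) ((hmin a (by omega)).1) ((hmin (a + 2) ha).1) hθ0 hθ1 (by ring)
  have hfst : θ * G a + (1 - θ) * G (a + 2) = G (a + 1) := by
    rw [hθ]; field_simp; ring
  have hmem' : (((G (a + 1) : ℝ), θ * Hb a + (1 - θ) * Hb (a + 2)) : ℝ × ℝ) ∈
      convexHull ℝ {P : ℝ × ℝ | ∃ j ≤ K, P = (G j, H j)} := by
    have heq : θ • ((G a, Hb a) : ℝ × ℝ) + (1 - θ) • ((G (a + 2), Hb (a + 2)) : ℝ × ℝ) =
        (((G (a + 1) : ℝ), θ * Hb a + (1 - θ) * Hb (a + 2)) : ℝ × ℝ) := by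
      rw [Prod.ext_iff]
      constructor
      · simpa using hfst
      · simp
    rw [← heq]; exact hmem
  have hle : Hb (a + 1) ≤ θ * Hb a + (1 - θ) * Hb (a + 2) :=
    (hmin (a + 1) (by omega)).2 hmem'
  rw [div_le_div_iff₀ he1 he2]
  have hθval : θ * (G (a + 2) - G a) = G (a + 2) - G (a + 1) := by
    rw [hθ]; field_simp
  have h2 : (1 - θ) * (G (a + 2) - G a) = G (a + 1) - G a := by
    linear_combination -hθval
  have expand : (θ * Hb a + (1 - θ) * Hb (a + 2)) * (G (a + 2) - G a) =
      Hb a * (G (a + 2) - G (a + 1)) + Hb (a + 2) * (G (a + 1) - G a) := by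
    linear_combination Hb a * hθval + Hb (a + 2) * h2
  have final : Hb (a + 1) * (G (a + 2) - G a) ≤
      Hb a * (G (a + 2) - G (a + 1)) + Hb (a + 2) * (G (a + 1) - G a) := by
    rw [← expand]
    exact mul_le_mul_of_nonneg_right hle hsum.le
  linarith [final]

private noncomputable def slp14 (G Hb : ℕ → ℝ) (l : ℕ) : ℝ := (Hb (l + 1) - Hb l) / (G (l + 1) - G l)

private lemma slp_mono14 {K : ℕ} {G H Hb : ℕ → ℝ}
    (hG : ∀ j, j < K → G j < G (j + 1))
    (hmin : ∀ i ≤ K, IsLeast {y : ℝ |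
      ((G i, y) : ℝ × ℝ) ∈ convexHull ℝ {P : ℝ × ℝ | ∃ j ≤ K, P = (G j, H j)}}
      (Hb i)) :
    ∀ a b : ℕ, a ≤ b → b + 1 ≤ K → slp14 G Hb a ≤ slp14 G Hb b := by
  intro a b hab
  refine Nat.le_induction ?_ ?_ b hab
  · intro _; exact le_rfl
  · intro n hn ih h
    refine (ih (by omega)).trans ?_
    have := env_convex14 hG hmin n (by omega)
    simpa [slp14] using this

private lemma chordslp_le14 {K : ℕ} {G Hb : ℕ → ℝ}
    (hG : ∀ j, j < K → G j < G (j + 1)) (w : ℝ) (a b : ℕ) (hab : a ≤ b) (hbK : b ≤ K)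
    (h : ∀ l, a ≤ l → l < b → slp14 G Hb l ≤ w) :
    Hb b - Hb a ≤ w * (G b - G a) := by
  refine chord_le14 Hb G w a b hab ?_
  intro l hl1 hl2
  have hE : 0 < G (l + 1) - G l := by have := hG l (by omega); linarith
  have := h l hl1 hl2
  rw [slp14, div_le_iff₀ hE] at this
  linarith

private lemma chordslp_ge14 {K : ℕ} {G Hb : ℕ → ℝ}
    (hG : ∀ j, j < K → G j < G (j + 1)) (w : ℝ) (a b : ℕ) (hab : a ≤ b) (hbK : b ≤ K)
    (h : ∀ l, a ≤ l → l < b → w ≤ slp14 G Hb l) :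
    w * (G b - G a) ≤ Hb b - Hb a := by
  refine chord_ge14 Hb G w a b hab ?_
  intro l hl1 hl2
  have hE : 0 < G (l + 1) - G l := by have := hG l (by omega); linarith
  have := h l hl1 hl2
  rw [slp14, le_div_iff₀ hE] at this
  linarith

private lemma env_kink14 {K : ℕ} {G H Hb : ℕ → ℝ}
    (hG : ∀ j, j < K → G j < G (j + 1))
    (hmin : ∀ i ≤ K, IsLeast {y : ℝ |
      ((G i, y) : ℝ × ℝ) ∈ convexHull ℝ {P : ℝ × ℝ | ∃ j ≤ K, P = (G j, H j)}}
      (Hb i)) (a : ℕ) (ha : a + 2 ≤ K) (hlt : Hb (a + 1) < H (a + 1)) :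
    slp14 G Hb (a + 1) ≤ slp14 G Hb a := by
  by_contra hcon
  push_neg at hcon
  set j := a + 1 with hjdef
  set sL := slp14 G Hb a with hsL
  set sR := slp14 G Hb (a + 1) with hsR
  have hjK : j ≤ K := by omega
  have hx := (hmin j hjK).1
  rw [convexHull_eq] at hx
  obtain ⟨ι, t, w, z, hw0, hw1, hzs, hcm⟩ := hx
  rw [Finset.centerMass_eq_of_sum_1 _ _ hw1] at hcm
  have hch : ∀ i : ι, ∃ m, m ≤ K ∧ (i ∈ t → z i = (G m, H m)) := by
    intro i
    by_cases hi : i ∈ t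
    · obtain ⟨m, hm, he⟩ := hzs i hi
      exact ⟨m, hm, fun _ => he⟩
    · exact ⟨0, Nat.zero_le K, fun h => absurd h hi⟩
  choose n hnK hze using hch
  have h1 : ∑ i ∈ t, w i * G (n i) = G j := by
    have h : ∑ c ∈ t, (w c • z c).1 = G j := by
      rw [← Prod.fst_sum, hcm]
    rw [← h]
    refine Finset.sum_congr rfl fun i hi => ?_
    rw [hze i hi]
    simp
  have h2 : ∑ i ∈ t, w i * H (n i) = Hb j := by
    have h : ∑ c ∈ t, (w c • z c).2 = Hb j := by
      rw [← Prod.snd_sum, hcm]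
    rw [← h]
    refine Finset.sum_congr rfl fun i hi => ?_
    rw [hze i hi]
    simp
  -- the upper bound at each grid point
  have hub : ∀ m, m ≤ K →
      Hb j + (sL * (G m - G j) + (sR - sL) * max (G m - G j) 0) ≤ H m := by
    intro m hm
    rcases le_or_gt m j with hmj | hmj
    · have hmax : max (G m - G j) 0 = 0 :=
        max_eq_right (by have := Gle14 hG m j hmj hjK; linarith)
      rw [hmax]
      have hch1 : Hb j - Hb m ≤ sL * (G j - G m) := by
        refine chordslp_le14 hG sL m j hmj hjK ?_
        intro l hl1 hl2
        exact slp_mono14 hG hmin l a (by omega) (by omega)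
      have hlem : Hb m ≤ H m := env_le14 hmin hm
      linarith
    · have hmax : max (G m - G j) 0 = G m - G j :=
        max_eq_left (by have := Gle14 hG j m hmj.le hm; linarith)
      rw [hmax]
      have hch1 : sR * (G m - G j) ≤ Hb m - Hb j := by
        refine chordslp_ge14 hG sR j m hmj.le hm ?_
        intro l hl1 hl2
        exact slp_mono14 hG hmin (a + 1) l hl1 (by omega)
      have hlem : Hb m ≤ H m := env_le14 hmin hm
      linarith
  -- summing up
  have hdevsum : ∑ i ∈ t, w i * (G (n i) - G j) = 0 := by
    have heq : ∑ i ∈ t, w i * (G (n i) - G j)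
        = (∑ i ∈ t, w i * G (n i)) - (∑ i ∈ t, w i) * G j := by
      rw [Finset.sum_mul, ← Finset.sum_sub_distrib]
      refine Finset.sum_congr rfl fun i hi => ?_
      ring
    rw [heq, h1, hw1, one_mul, sub_self]
  have hgesum : ∑ i ∈ t, w i * (Hb j + (sL * (G (n i) - G j) + (sR - sL) * max (G (n i) - G j) 0))
      ≤ Hb j := by
    refine le_trans (Finset.sum_le_sum fun i hi => ?_) (le_of_eq h2)
    exact mul_le_mul_of_nonneg_left (hub (n i) (hnK i)) (hw0 i hi)
  have hsplit : ∑ i ∈ t, w i * (Hb j + (sL * (G (n i) - G j) + (sR - sL) * max (G (n i) - G j) 0))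
      = ∑ i ∈ t, (w i * Hb j + (sL * (w i * (G (n i) - G j))
          + (sR - sL) * (w i * max (G (n i) - G j) 0))) :=
    Finset.sum_congr rfl fun i _ => by ring
  rw [hsplit, Finset.sum_add_distrib, Finset.sum_add_distrib, ← Finset.mul_sum, ← Finset.mul_sum,
    ← Finset.sum_mul, hw1, one_mul, hdevsum, mul_zero, zero_add] at hgesum
  -- so (sR - sL) * T ≤ 0 with T ≥ 0, hence T = 0
  set T := ∑ i ∈ t, w i * max (G (n i) - G j) 0 with hT
  have hTnn : 0 ≤ T := Finset.sum_nonneg fun i hi =>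
    mul_nonneg (hw0 i hi) (le_max_right _ _)
  have hsRL : 0 < sR - sL := by linarith
  have hTz : T = 0 := by nlinarith
  have hterm : ∀ i ∈ t, w i * max (G (n i) - G j) 0 = 0 :=
    (Finset.sum_eq_zero_iff_of_nonneg fun i hi =>
      mul_nonneg (hw0 i hi) (le_max_right _ _)).mp hTz
  -- each weighted deviation is ≤ 0, and they sum to 0
  have hdev_le : ∀ i ∈ t, w i * (G (n i) - G j) ≤ 0 := by
    intro i hi
    calc w i * (G (n i) - G j) ≤ w i * max (G (n i) - G j) 0 :=
          mul_le_mul_of_nonneg_left (le_max_left _ _) (hw0 i hi)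
      _ = 0 := hterm i hi
  have hdev0 : ∀ i ∈ t, w i * (G (n i) - G j) = 0 := by
    intro i hi
    have := (Finset.sum_eq_zero_iff_of_nonpos hdev_le).mp hdevsum i hi
    exact this
  -- hence every point with positive weight is the point j itself
  have hHeq : ∀ i ∈ t, w i * H (n i) = w i * H j := by
    intro i hi
    rcases eq_or_lt_of_le (hw0 i hi) with hw | hw
    · rw [← hw]; ring
    · have hGeq : G (n i) = G j := by
        rcases mul_eq_zero.mp (hdev0 i hi) with h | h
        · exact absurd h.symm (ne_of_lt hw)
        · linarith
      have hnij : n i = j := by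
        rcases lt_trichotomy (n i) j with h | h | h
        · exact absurd hGeq (ne_of_lt (Glt14 hG _ _ h hjK))
        · exact h
        · exact absurd hGeq.symm (ne_of_lt (Glt14 hG _ _ h (hnK i)))
      rw [hnij]
  have : Hb j = H j := by
    rw [← h2, Finset.sum_congr rfl hHeq, ← Finset.sum_mul, hw1, one_mul]
  exact absurd this (ne_of_lt hlt)

private lemma gsum14 (K : ℕ) (p g : ℕ → ℝ)
    (hp1 : ∑ i ∈ Finset.Icc 1 K, p i = 1)
    (hg : ∀ i ≤ K, g i = ∑ j ∈ Finset.Icc 1 i, p j) :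
    ∀ m ≤ K, g m = 1 - ∑ l ∈ Finset.Icc (m + 1) K, p l := by
  intro m hm
  rcases Nat.eq_zero_or_pos m with rfl | h1
  · rw [hg 0 (Nat.zero_le K), Finset.Icc_eq_empty (by omega), Finset.sum_empty,
      show (0:ℕ) + 1 = 1 from rfl, hp1]
    ring
  · rw [hg m hm, ← hp1,
      show Finset.Icc 1 m = Finset.Ioc 0 m from by exact Finset.Icc_add_one_left_eq_Ioc ..,
      show Finset.Icc 1 K = Finset.Ioc 0 K from by exact Finset.Icc_add_one_left_eq_Ioc ..,
      show Finset.Icc (m + 1) K = Finset.Ioc m K from by exact Finset.Icc_add_one_left_eq_Ioc ..,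
      ← Finset.sum_Ioc_consecutive p (Nat.zero_le m) hm]
    ring



/-- Under the hazard rate order between the probability vectors
p_s and p_t, the monotone virtual valuations satisfy w̄_s^i ≥ w̄_t^i for all
1 ≤ i ≤ K. -/
theorem stmt_14 (K : ℕ) (hK : 1 ≤ K) (x ps pt : ℕ → ℝ)
    (hx0 : 0 ≤ x 1)
    (hxlt : ∀ i, 1 ≤ i → i < K → x i < x (i + 1))
    (hps : ∀ i, 1 ≤ i → i ≤ K → 0 < ps i)
    (hps1 : ∑ i ∈ Finset.Icc 1 K, ps i = 1)
    (hpt : ∀ i, 1 ≤ i → i ≤ K → 0 < pt i)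
    (hpt1 : ∑ i ∈ Finset.Icc 1 K, pt i = 1)
    (gs hs hbars wbars : ℕ → ℝ)
    (hgs : ∀ i ≤ K, gs i = ∑ j ∈ Finset.Icc 1 i, ps j)
    (hhs : ∀ i ≤ K, hs i = -x (i + 1) * ∑ j ∈ Finset.Icc (i + 1) K, ps j)
    (hbars_min : ∀ i ≤ K, IsLeast {y : ℝ |
        ((gs i, y) : ℝ × ℝ) ∈ convexHull ℝ {P : ℝ × ℝ | ∃ j ≤ K, P = (gs j, hs j)}}
      (hbars i))
    (hwbars : ∀ i, 1 ≤ i → i ≤ K →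
      wbars i = (hbars i - hbars (i - 1)) / (gs i - gs (i - 1)))
    (gt ht hbart wbart : ℕ → ℝ)
    (hgt : ∀ i ≤ K, gt i = ∑ j ∈ Finset.Icc 1 i, pt j)
    (hht : ∀ i ≤ K, ht i = -x (i + 1) * ∑ j ∈ Finset.Icc (i + 1) K, pt j)
    (hbart_min : ∀ i ≤ K, IsLeast {y : ℝ |
        ((gt i, y) : ℝ × ℝ) ∈ convexHull ℝ {P : ℝ × ℝ | ∃ j ≤ K, P = (gt j, ht j)}}
      (hbart i))
    (hwbart : ∀ i, 1 ≤ i → i ≤ K →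
      wbart i = (hbart i - hbart (i - 1)) / (gt i - gt (i - 1)))
    (hazard : ∀ i j, 1 ≤ j → j ≤ i → i ≤ K →
      (∑ l ∈ Finset.Icc i K, ps l) * (∑ l ∈ Finset.Icc j K, pt l) ≤
        (∑ l ∈ Finset.Icc i K, pt l) * (∑ l ∈ Finset.Icc j K, ps l)) :
    ∀ i, 1 ≤ i → i ≤ K → wbars i ≥ wbart i := by
    classical
  intro i hi1 hiK
  -- strict monotonicity of the quantile grids
  have hGs : ∀ j, j < K → gs j < gs (j + 1) := by
    intro j hj
    have e1 : gs (j + 1) = gs j + ps (j + 1) := by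
      rw [hgs (j + 1) (by omega), hgs j (by omega),
        Finset.sum_Icc_succ_top (by omega : 1 ≤ j + 1)]
    have := hps (j + 1) (by omega) (by omega)
    linarith
  have hGt : ∀ j, j < K → gt j < gt (j + 1) := by
    intro j hj
    have e1 : gt (j + 1) = gt j + pt (j + 1) := by
      rw [hgt (j + 1) (by omega), hgt j (by omega),
        Finset.sum_Icc_succ_top (by omega : 1 ≤ j + 1)]
    have := hpt (j + 1) (by omega) (by omega)
    linarith
  -- monotonicity of x on [1, K]
  have hxle : ∀ m n : ℕ, 1 ≤ m → m ≤ n → n ≤ K → x m ≤ x n := by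
    intro m n h1 hmn hnK
    induction n with
    | zero => omega
    | succ n ih =>
      rcases Nat.eq_or_lt_of_le hmn with h | h
      · rw [h]
      · exact (ih (by omega) (by omega)).trans (hxlt n (by omega) (by omega)).le
  -- the first contact point of the s-envelope at or after i
  have hexb : ∃ j, i ≤ j ∧ j ≤ K ∧ hbars j = hs j :=
    ⟨K, hiK, le_rfl, env_K14 hK hGs hbars_min⟩
  set b := Nat.find hexb with hbdef
  obtain ⟨hib, hbK, hbcontact⟩ := Nat.find_spec hexb
  have hbmin : ∀ l, i ≤ l → l < b → hbars l < hs l := by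
    intro l hl1 hl2
    have hne := Nat.find_min hexb hl2
    push_neg at hne
    have hlK : l ≤ K := by omega
    exact lt_of_le_of_ne (env_le14 hbars_min hlK) (hne hl1 hlK)
  -- the last contact point of the t-envelope at or before i - 1
  obtain ⟨A, hA1⟩ : ∃ A, A + 1 = i := ⟨i - 1, by omega⟩
  have h0t : hbart 0 = ht 0 := env_zero14 hK hGt hbart_min
  set a := Nat.findGreatest (fun j => hbart j = ht j) A with hadef
  have hacontact : hbart a = ht a := by
    rw [hadef]
    exact Nat.findGreatest_spec (P := fun j => hbart j = ht j) (Nat.zero_le A) h0t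
  have haA : a ≤ A := Nat.findGreatest_le A
  have hamax : ∀ l, a < l → l ≤ A → hbart l < ht l := by
    intro l hl1 hl2
    have hne := Nat.findGreatest_is_greatest hl1 hl2
    exact lt_of_le_of_ne (env_le14 hbart_min (by omega)) hne
  have hab : a < b := by omega
  -- slopes of the s-envelope are constant on [A, b-1] and ≤ that before
  have hs_const : ∀ l, A ≤ l → l < b → slp14 gs hbars l = slp14 gs hbars A := by
    intro l hAl
    refine Nat.le_induction ?_ ?_ l hAl
    · intro _; rfl
    · intro n hn ih hnb
      have h1 : slp14 gs hbars (n + 1) ≤ slp14 gs hbars n := by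
        refine env_kink14 hGs hbars_min n (by omega) ?_
        exact hbmin (n + 1) (by omega) (by omega)
      have h2 : slp14 gs hbars n ≤ slp14 gs hbars (n + 1) :=
        slp_mono14 hGs hbars_min n (n + 1) (by omega) (by omega)
      exact (le_antisymm h1 h2).trans (ih (by omega))
  have hs_le : ∀ l, l < b → slp14 gs hbars l ≤ slp14 gs hbars A := by
    intro l hl
    rcases le_or_gt l A with h | h
    · exact slp_mono14 hGs hbars_min l A h (by omega)
    · exact (hs_const l h.le hl).le
  -- upper bound for the s-side ironed virtual value via the chord (a, b)
  have h4 : hs b - hs a ≤ slp14 gs hbars A * (gs b - gs a) := by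
    have hc : hbars b - hbars a ≤ slp14 gs hbars A * (gs b - gs a) :=
      chordslp_le14 hGs _ a b hab.le hbK (fun l _ hl2 => hs_le l hl2)
    have hea : hbars a ≤ hs a := env_le14 hbars_min (by omega)
    rw [hbcontact] at hc
    linarith
  -- slopes of the t-envelope are constant on [a, A] and ≥ that after
  have ht_const : ∀ l, a ≤ l → l ≤ A → slp14 gt hbart l = slp14 gt hbart a := by
    intro l hal
    refine Nat.le_induction ?_ ?_ l hal
    · intro _; rfl
    · intro n hn ih hnA
      have h1 : slp14 gt hbart (n + 1) ≤ slp14 gt hbart n := by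
        refine env_kink14 hGt hbart_min n (by omega) ?_
        exact hamax (n + 1) (by omega) hnA
      have h2 : slp14 gt hbart n ≤ slp14 gt hbart (n + 1) :=
        slp_mono14 hGt hbart_min n (n + 1) (by omega) (by omega)
      exact (le_antisymm h1 h2).trans (ih (by omega))
  have ht_ge : ∀ l, a ≤ l → l < b → slp14 gt hbart A ≤ slp14 gt hbart l := by
    intro l hl1 hl2
    rcases le_or_gt l A with h | h
    · rw [ht_const l hl1 h, ← ht_const A haA le_rfl]
    · exact slp_mono14 hGt hbart_min A l h.le (by omega)
  -- lower bound for the t-side ironed virtual value via the chord (a, b)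
  have h7 : slp14 gt hbart A * (gt b - gt a) ≤ ht b - ht a := by
    have hc : slp14 gt hbart A * (gt b - gt a) ≤ hbart b - hbart a :=
      chordslp_ge14 hGt _ a b hab.le hbK (fun l hl1 hl2 => ht_ge l hl1 hl2)
    have heb : hbart b ≤ ht b := env_le14 hbart_min hbK
    rw [hacontact] at hc
    linarith
  -- positive denominators
  have hgspos : 0 < gs b - gs a := by
    have := Glt14 hGs a b hab hbK; linarith
  have hgtpos : 0 < gt b - gt a := by
    have := Glt14 hGt a b hab hbK; linarith
  -- the hazard-rate chord comparison
  have hchord : (ht b - ht a) * (gs b - gs a) ≤ (hs b - hs a) * (gt b - gt a) := by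
    have hsa : hs a = -x (a + 1) * ∑ l ∈ Finset.Icc (a + 1) K, ps l := hhs a (by omega)
    have hsb : hs b = -x (b + 1) * ∑ l ∈ Finset.Icc (b + 1) K, ps l := hhs b hbK
    have hta : ht a = -x (a + 1) * ∑ l ∈ Finset.Icc (a + 1) K, pt l := hht a (by omega)
    have htb : ht b = -x (b + 1) * ∑ l ∈ Finset.Icc (b + 1) K, pt l := hht b hbK
    have hgab : gs b - gs a =
        (∑ l ∈ Finset.Icc (a + 1) K, ps l) - ∑ l ∈ Finset.Icc (b + 1) K, ps l := by
      rw [gsum14 K ps gs hps1 hgs b hbK, gsum14 K ps gs hps1 hgs a (by omega)]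
      ring
    have hgab' : gt b - gt a =
        (∑ l ∈ Finset.Icc (a + 1) K, pt l) - ∑ l ∈ Finset.Icc (b + 1) K, pt l := by
      rw [gsum14 K pt gt hpt1 hgt b hbK, gsum14 K pt gt hpt1 hgt a (by omega)]
      ring
    rw [hsa, hsb, hta, htb, hgab, hgab']
    rcases Nat.eq_or_lt_of_le hbK with hbeq | hblt
    · have hempty : Finset.Icc (b + 1) K = (∅ : Finset ℕ) := Finset.Icc_eq_empty (by omega)
      rw [hempty, Finset.sum_empty]
      exact le_of_eq (by ring)
    · have hz := hazard (b + 1) (a + 1) (by omega) (by omega) (by omega)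
      have hx' : x (a + 1) ≤ x (b + 1) := hxle (a + 1) (b + 1) (by omega) (by omega) (by omega)
      nlinarith [mul_nonneg (sub_nonneg.mpr hx') (sub_nonneg.mpr hz)]
  -- put everything together
  have hwseq : wbars i = slp14 gs hbars A := by
    rw [hwbars i hi1 hiK, show i - 1 = A by omega, slp14, hA1]
  have hwteq : wbart i = slp14 gt hbart A := by
    rw [hwbart i hi1 hiK, show i - 1 = A by omega, slp14, hA1]
  rw [ge_iff_le, hwseq, hwteq]
  have step1 : slp14 gt hbart A ≤ (ht b - ht a) / (gt b - gt a) := by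
    rw [le_div_iff₀ hgtpos]; exact h7
  have step2 : (ht b - ht a) / (gt b - gt a) ≤ (hs b - hs a) / (gs b - gs a) := by
    rw [div_le_div_iff₀ hgtpos hgspos]; exact hchord
  have step3 : (hs b - hs a) / (gs b - gs a) ≤ slp14 gs hbars A := by
    rw [div_le_iff₀ hgspos]; exact h4
  exact step1.trans (step2.trans step3)
end

section
/- Assume x^K > 0, and let k* be the largest index i ∈ {1,…,K} maximizing x^i·(Σ_{j=i}^K p^j). Then w̄^i ≤ 0 for all 1 ≤ i < k*, and w̄^i > 0 for all k* ≤ i ≤ K. -/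
/-- A closed upper halfspace in the plane is convex. -/
lemma stmt15_halfspace_convex (a c : ℝ) :
    Convex ℝ {P : ℝ × ℝ | a * P.1 + c ≤ P.2} := by
  intro P hP Q hQ s t hs ht hst
  simp only [Set.mem_setOf_eq, Prod.fst_add, Prod.snd_add, Prod.smul_fst, Prod.smul_snd,
    smul_eq_mul] at *
  have key : a * (s * P.1 + t * Q.1) + c = s * (a * P.1 + c) + t * (a * Q.1 + c) := by
    linear_combination (-c) * hst
  have h1 := mul_le_mul_of_nonneg_left hP hs
  have h2 := mul_le_mul_of_nonneg_left hQ ht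
  linarith

/-- If x^K > 0 and k* is the largest maximizer of
x^i·Σ_{j=i}^K p^j over 1 ≤ i ≤ K, then w̄^i ≤ 0 for 1 ≤ i < k* and
w̄^i > 0 for k* ≤ i ≤ K. -/
theorem stmt_15 (K : ℕ) (hK : 1 ≤ K) (x p : ℕ → ℝ)
    (hx0 : 0 ≤ x 1)
    (hxlt : ∀ i, 1 ≤ i → i < K → x i < x (i + 1))
    (hxK : 0 < x K)
    (hp : ∀ i, 1 ≤ i → i ≤ K → 0 < p i)
    (hp1 : ∑ i ∈ Finset.Icc 1 K, p i = 1)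
    (g h hbar wbar : ℕ → ℝ)
    (hg : ∀ i ≤ K, g i = ∑ j ∈ Finset.Icc 1 i, p j)
    (hh : ∀ i ≤ K, h i = -x (i + 1) * ∑ j ∈ Finset.Icc (i + 1) K, p j)
    (hbar_min : ∀ i ≤ K, IsLeast {y : ℝ |
        ((g i, y) : ℝ × ℝ) ∈ convexHull ℝ {P : ℝ × ℝ | ∃ j ≤ K, P = (g j, h j)}}
      (hbar i))
    (hwbar : ∀ i, 1 ≤ i → i ≤ K →
      wbar i = (hbar i - hbar (i - 1)) / (g i - g (i - 1)))
    (kstar : ℕ) (hk1 : 1 ≤ kstar) (hk2 : kstar ≤ K)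
    (hkmax : ∀ i, 1 ≤ i → i ≤ K →
      x i * ∑ j ∈ Finset.Icc i K, p j ≤ x kstar * ∑ j ∈ Finset.Icc kstar K, p j)
    (hklargest : ∀ i, 1 ≤ i → i ≤ K →
      x i * ∑ j ∈ Finset.Icc i K, p j = x kstar * ∑ j ∈ Finset.Icc kstar K, p j →
      i ≤ kstar) :
    (∀ i, 1 ≤ i → i < kstar → wbar i ≤ 0) ∧
    (∀ i, kstar ≤ i → i ≤ K → 0 < wbar i) := by
  obtain ⟨m, rfl⟩ : ∃ m, kstar = m + 1 := ⟨kstar - 1, (Nat.succ_pred_eq_of_pos hk1).symm⟩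
  have hmK : m < K := hk2
  set S : Set (ℝ × ℝ) := {P : ℝ × ℝ | ∃ j ≤ K, P = (g j, h j)} with hS
  -- monotonicity of g
  have gmono : ∀ i j : ℕ, i < j → j ≤ K → g i < g j := by
    intro i j hij hjK
    rw [hg i (by omega), hg j hjK]
    have key : ∑ k ∈ Finset.Icc 1 i, p k + ∑ k ∈ Finset.Icc (i+1) j, p k
        = ∑ k ∈ Finset.Icc 1 j, p k := by
      rw [show Finset.Icc 1 i = Finset.Ioc 0 i from Finset.Icc_add_one_left_eq_Ioc 0 i,
        show Finset.Icc (i+1) j = Finset.Ioc i j from Finset.Icc_add_one_left_eq_Ioc i j,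
        show Finset.Icc 1 j = Finset.Ioc 0 j from Finset.Icc_add_one_left_eq_Ioc 0 j]
      exact Finset.sum_Ioc_consecutive _ (Nat.zero_le i) (le_of_lt hij)
    have pos : 0 < ∑ k ∈ Finset.Icc (i+1) j, p k := by
      apply Finset.sum_pos
      · intro k hk
        simp only [Finset.mem_Icc] at hk
        exact hp k (by omega) (by omega)
      · exact ⟨j, by simp only [Finset.mem_Icc]; omega⟩
    linarith
  have gmono' : ∀ i j : ℕ, i ≤ j → j ≤ K → g i ≤ g j := by
    intro i j hij hjK
    rcases eq_or_lt_of_le hij with rfl | hlt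
    · exact le_refl _
    · exact le_of_lt (gmono i j hlt hjK)
  -- points in the hull
  have hmem_pt : ∀ j ≤ K, ((g j, h j) : ℝ × ℝ) ∈ convexHull ℝ S := by
    intro j hj
    exact subset_convexHull ℝ S ⟨j, hj, rfl⟩
  have hbar_le : ∀ j ≤ K, hbar j ≤ h j := fun j hj => (hbar_min j hj).2 (hmem_pt j hj)
  -- line lower bounds
  have hline : ∀ a c : ℝ, (∀ j ≤ K, a * g j + c ≤ h j) →
      ∀ i ≤ K, a * g i + c ≤ hbar i := by
    intro a c hac i hi
    have hsub : S ⊆ {P : ℝ × ℝ | a * P.1 + c ≤ P.2} := by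
      rintro P ⟨j, hj, rfl⟩
      exact hac j hj
    exact convexHull_min hsub (stmt15_halfspace_convex a c) (hbar_min i hi).1
  -- convexity of hbar
  have hconv : ∀ a b c : ℕ, a < b → b < c → c ≤ K →
      ∃ s t : ℝ, 0 < s ∧ 0 < t ∧ s + t = 1 ∧ hbar b ≤ s * hbar a + t * hbar c := by
    intro a b c hab hbc hcK
    have haK : a ≤ K := by omega
    have hbK : b ≤ K := by omega
    have h1 : g a < g b := gmono a b hab hbK
    have h2 : g b < g c := gmono b c hbc hcK
    have hd : (0:ℝ) < g c - g a := by linarith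
    refine ⟨(g c - g b)/(g c - g a), (g b - g a)/(g c - g a),
      div_pos (by linarith) hd, div_pos (by linarith) hd, by field_simp; ring, ?_⟩
    set s := (g c - g b)/(g c - g a) with hs
    set t := (g b - g a)/(g c - g a) with ht
    have hst : s + t = 1 := by rw [hs, ht]; field_simp; ring
    have hcoord : s * g a + t * g c = g b := by
      rw [hs, ht]; field_simp; ring
    have hmemc : (s • ((g a, hbar a) : ℝ × ℝ) + t • ((g c, hbar c) : ℝ × ℝ))
        ∈ convexHull ℝ S :=
      (convex_convexHull ℝ S) (hbar_min a haK).1 (hbar_min c hcK).1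
        (le_of_lt (div_pos (by linarith) hd)) (le_of_lt (div_pos (by linarith) hd)) hst
    have heq : (s • ((g a, hbar a) : ℝ × ℝ) + t • ((g c, hbar c) : ℝ × ℝ))
        = ((g b, s * hbar a + t * hbar c) : ℝ × ℝ) := by
      simp only [Prod.smul_mk, smul_eq_mul, Prod.mk_add_mk, Prod.mk.injEq]
      exact ⟨hcoord, trivial⟩
    rw [heq] at hmemc
    exact (hbar_min b hbK).2 hmemc
  -- value of h at m and K
  have hhK : h K = 0 := by
    rw [hh K le_rfl, Finset.Icc_eq_empty (by omega), Finset.sum_empty, mul_zero]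
  have hposm : 0 < x (m+1) * ∑ j ∈ Finset.Icc (m+1) K, p j := by
    have h1 := hkmax K hK le_rfl
    have h2 : ∑ j ∈ Finset.Icc K K, p j = p K := by simp
    have h3 : 0 < x K * p K := mul_pos hxK (hp K hK le_rfl)
    rw [h2] at h1
    linarith
  have hhm : h m = -(x (m+1) * ∑ j ∈ Finset.Icc (m+1) K, p j) := by
    rw [hh m (by omega)]; ring
  have hm_neg : h m < 0 := by rw [hhm]; linarith
  -- h m is the minimum
  have hm_le : ∀ j ≤ K, h m ≤ h j := by
    intro j hj
    rcases eq_or_lt_of_le hj with rfl | hjK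
    · rw [hhK]; linarith
    · have h1 := hkmax (j+1) (by omega) (by omega)
      rw [hh j hj, hhm]
      linarith
  -- strict minimality past m
  have hstrict : ∀ j, m < j → j ≤ K → h m < h j := by
    intro j hmj hj
    rcases eq_or_lt_of_le hj with rfl | hjK
    · rw [hhK]; linarith
    · rcases lt_or_ge (h m) (h j) with hlt | hle
      · exact hlt
      · exfalso
        have heq : h j = h m := le_antisymm hle (hm_le j hj)
        have h1 : x (j+1) * ∑ k ∈ Finset.Icc (j+1) K, p k
            = x (m+1) * ∑ k ∈ Finset.Icc (m+1) K, p k := by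
          have := hh j hj
          rw [heq, hhm] at this
          linarith
        have := hklargest (j+1) (by omega) (by omega) h1
        omega
  -- hbar ≥ h m everywhere, hbar m = h m
  have hbar_ge : ∀ i ≤ K, h m ≤ hbar i := by
    intro i hi
    have := hline 0 (h m) (fun j hj => by simpa using hm_le j hj) i hi
    simpa using this
  have hbar_m : hbar m = h m :=
    le_antisymm (hbar_le m (by omega)) (hbar_ge m (by omega))
  -- positive-slope separating line
  have hTne : (Finset.Icc (m+1) K).Nonempty := ⟨m+1, by simp only [Finset.mem_Icc]; omega⟩
  set c : ℝ := (Finset.Icc (m+1) K).inf' hTne (fun j => (h j - h m)/(g j - g m)) with hc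
  have hc_pos : 0 < c := by
    rw [hc, Finset.lt_inf'_iff]
    intro j hj
    simp only [Finset.mem_Icc] at hj
    exact div_pos (by linarith [hstrict j (by omega) hj.2])
      (by linarith [gmono m j (by omega) hj.2])
  have hline_le : ∀ j ≤ K, c * g j + (h m - c * g m) ≤ h j := by
    intro j hj
    rcases le_or_gt j m with hjm | hmj
    · have h1 : g j ≤ g m := gmono' j m hjm (by omega)
      have h2 := hm_le j hj
      nlinarith
    · have h3 : c ≤ (h j - h m)/(g j - g m) :=
        Finset.inf'_le _ (by simp only [Finset.mem_Icc]; omega)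
      have h4 : (0:ℝ) < g j - g m := by linarith [gmono m j hmj hj]
      have h5 : c * (g j - g m) ≤ h j - h m := by
        rw [← le_div_iff₀ h4] at *
        exact h3
      linarith
  have hbar_gt : ∀ i, m < i → i ≤ K → hbar m < hbar i := by
    intro i hmi hi
    have h1 := hline c (h m - c * g m) hline_le i hi
    have h2 : (0:ℝ) < g i - g m := by linarith [gmono m i hmi hi]
    rw [hbar_m]
    nlinarith
  constructor
  · -- slopes ≤ 0 before kstar
    intro i hi1 hik
    have hiK : i ≤ K := by omega
    have him : i ≤ m := by omega
    have hdec : hbar i ≤ hbar (i-1) := by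
      rcases eq_or_lt_of_le him with rfl | hlt
      · rw [hbar_m]
        exact hbar_ge (i-1) (by omega)
      · obtain ⟨s, t, hs, ht, hst, hle⟩ := hconv (i-1) i m (by omega) hlt (by omega)
        have h1 : hbar m ≤ hbar (i-1) := by
          rw [hbar_m]; exact hbar_ge (i-1) (by omega)
        nlinarith
    rw [hwbar i hi1 hiK]
    apply div_nonpos_of_nonpos_of_nonneg
    · linarith
    · linarith [gmono (i-1) i (by omega) hiK]
  · -- slopes > 0 from kstar on
    intro i hki hiK
    have hinc : hbar (i-1) < hbar i := by
      rcases eq_or_lt_of_le hki with heq | hlt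
      · have : i - 1 = m := by omega
        rw [this]
        exact hbar_gt i (by omega) hiK
      · obtain ⟨s, t, hs, ht, hst, hle⟩ := hconv m (i-1) i (by omega) (by omega) hiK
        have h1 : hbar m < hbar i := hbar_gt i (by omega) hiK
        nlinarith
    rw [hwbar i (by omega) hiK]
    exact div_pos (by linarith) (by linarith [gmono (i-1) i (by omega) hiK])
end
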